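/- arXiv:2206.09558 — 3 statements merged into one kernel-verified Lean document; each statement's English description precedes it below -/
import Mathlib

section
/- Let H be a connected k-uniform hypergraph with maximum degree Δ ≥ 2. Then the maximum-modulus zero λ(H) of μ(H,x) is a real positive number, it is a simple root of μ(H,x), and it is not a root of the derivative μ'(H,x) = Σ_{v∈V(H)} μ(H−v,x); in fact Σ_{v∈V(H)} μ(H−v,λ(H)) > 0. -/
open scoped Classical

structure FinHypergraph (α : Type*) [DecidableEq α] where
  verts : Finset α
  edges : Finset (Finset α)
  edge_sub : ∀ e ∈ edges, e ⊆ verts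

namespace FinHypergraph

variable {α : Type*} [DecidableEq α] {β : Type*} [DecidableEq β]

/-- `H` is `k`-uniform: every edge has exactly `k` vertices. -/
def IsUniform (H : FinHypergraph α) (k : ℕ) : Prop := ∀ e ∈ H.edges, e.card = k

/-- The degree of a vertex: the number of edges containing it. -/
def degree (H : FinHypergraph α) (v : α) : ℕ := (H.edges.filter (fun e => v ∈ e)).card

/-- `Δ` is the maximum degree of `H`. -/
def maxDegree (H : FinHypergraph α) (Δ : ℕ) : Prop :=
  (∀ v, H.degree v ≤ Δ) ∧ ∃ v ∈ H.verts, H.degree v = Δ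

/-- Two vertices are adjacent if some edge contains both. -/
def Adj (H : FinHypergraph α) (a b : α) : Prop := ∃ e ∈ H.edges, a ∈ e ∧ b ∈ e

/-- `H` is connected: nonempty and any two vertices joined by a walk. -/
def Connected (H : FinHypergraph α) : Prop :=
  H.verts.Nonempty ∧ ∀ a ∈ H.verts, ∀ b ∈ H.verts, Relation.ReflTransGen H.Adj a b

/-- A matching: a set of pairwise disjoint edges of `H`. -/
def IsMatching (H : FinHypergraph α) (M : Finset (Finset α)) : Prop :=
  M ⊆ H.edges ∧ ∀ e ∈ M, ∀ f ∈ M, e ≠ f → Disjoint e f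

/-- `p(H, r)`: the number of matchings of size `r`. -/
noncomputable def matchCount (H : FinHypergraph α) (r : ℕ) : ℕ :=
  (H.edges.powerset.filter (fun M => M.card = r ∧ H.IsMatching M)).card

/-- The matching polynomial `μ(H,x) = Σ_r (-1)^r p(H,r) x^{|V| - k r}`. -/
noncomputable def matchingPoly (H : FinHypergraph α) (k : ℕ) : Polynomial ℝ :=
  ∑ r ∈ Finset.range (H.edges.card + 1),
    Polynomial.C ((-1 : ℝ) ^ r * (H.matchCount r : ℝ)) * Polynomial.X ^ (H.verts.card - k * r)

/-- Deleting a set of vertices: induced sub-hypergraph on `verts \ W`. -/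
def delete (H : FinHypergraph α) (W : Finset α) : FinHypergraph α where
  verts := H.verts \ W
  edges := H.edges.filter (fun e => Disjoint e W)
  edge_sub := by
    intro e he
    simp only [Finset.mem_filter] at he
    exact Finset.subset_sdiff.mpr ⟨H.edge_sub e he.1, he.2⟩

/-- The set of moduli of the complex zeros of a real polynomial. -/
def rootModuli (p : Polynomial ℝ) : Set ℝ :=
  {m | ∃ z : ℂ, (Polynomial.aeval z) p = 0 ∧ ‖z‖ = m}

/-- `λ(H)`: the maximum modulus of the complex zeros of the matching polynomial. -/
noncomputable def lam (H : FinHypergraph α) (k : ℕ) : ℝ :=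
  sSup (rootModuli (H.matchingPoly k))

end FinHypergraph

namespace FinHypergraph

open Polynomial Finset

variable {α : Type*} [DecidableEq α]

theorem hg_ext {H1 H2 : FinHypergraph α} (hv : H1.verts = H2.verts)
    (he : H1.edges = H2.edges) : H1 = H2 := by
  cases H1; cases H2; simp_all

@[simp] lemma delete_verts (H : FinHypergraph α) (W : Finset α) :
    (H.delete W).verts = H.verts \ W := rfl

@[simp] lemma delete_edges (H : FinHypergraph α) (W : Finset α) :
    (H.delete W).edges = H.edges.filter (fun e => Disjoint e W) := rfl

lemma edge_subset {H : FinHypergraph α} {e : Finset α} (he : e ∈ H.edges) : e ⊆ H.verts :=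
  H.edge_sub e he

lemma mem_delete_edges {H : FinHypergraph α} {W : Finset α} {e : Finset α} :
    e ∈ (H.delete W).edges ↔ e ∈ H.edges ∧ e ⊆ H.verts \ W := by
  simp only [delete_edges, mem_filter]
  constructor
  · rintro ⟨he, hd⟩; exact ⟨he, Finset.subset_sdiff.mpr ⟨edge_subset he, hd⟩⟩
  · rintro ⟨he, hs⟩; exact ⟨he, (Finset.subset_sdiff.mp hs).2⟩

lemma delete_delete (H : FinHypergraph α) (W W' : Finset α) :
    (H.delete W).delete W' = H.delete (W ∪ W') := by
  apply hg_ext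
  · ext x; simp only [delete_verts, mem_sdiff, mem_union]; tauto
  · ext e
    simp only [delete_edges, mem_filter, Finset.disjoint_union_right]
    tauto

lemma delete_eq_of_sdiff_eq {H : FinHypergraph α} {W W' : Finset α}
    (h : H.verts \ W = H.verts \ W') : H.delete W = H.delete W' := by
  apply hg_ext
  · simpa using h
  · ext e
    rw [mem_delete_edges, mem_delete_edges, h]

lemma delete_eq_self {H : FinHypergraph α} {W : Finset α} (h : Disjoint H.verts W) :
    H.delete W = H := by
  apply hg_ext
  · simp [Finset.sdiff_eq_self_of_disjoint h]
  · ext e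
    simp only [delete_edges, mem_filter, and_iff_left_iff_imp]
    intro he
    exact Finset.disjoint_of_subset_left (edge_subset he) h

lemma delete_uniform {H : FinHypergraph α} {k : ℕ} (hu : H.IsUniform k) (W : Finset α) :
    (H.delete W).IsUniform k := fun e he => hu e (Finset.mem_filter.mp he).1

lemma adj_symm {H : FinHypergraph α} {a b : α} (h : H.Adj a b) : H.Adj b a := by
  obtain ⟨e, he, ha, hb⟩ := h; exact ⟨e, he, hb, ha⟩

/-! ### Matchings -/

noncomputable def MM (H : FinHypergraph α) : Finset (Finset (Finset α)) :=
  H.edges.powerset.filter (fun M => H.IsMatching M)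

lemma mem_MM {H : FinHypergraph α} {M : Finset (Finset α)} :
    M ∈ MM H ↔ H.IsMatching M := by
  simp only [MM, mem_filter, mem_powerset]
  exact ⟨fun h => h.2, fun h => ⟨h.1, h⟩⟩

lemma empty_isMatching (H : FinHypergraph α) : H.IsMatching ∅ :=
  ⟨Finset.empty_subset _, by simp⟩

lemma card_biUnion_matching {H : FinHypergraph α} {k : ℕ} (hu : H.IsUniform k)
    {M : Finset (Finset α)} (hM : H.IsMatching M) :
    (M.biUnion (fun e => e)).card = k * M.card := by
  rw [Finset.card_biUnion (fun x hx y hy hxy => hM.2 x hx y hy hxy)]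
  rw [Finset.sum_congr rfl (fun e he => hu e (hM.1 he))]
  simp [mul_comm]

lemma k_mul_card_le {H : FinHypergraph α} {k : ℕ} (hu : H.IsUniform k)
    {M : Finset (Finset α)} (hM : H.IsMatching M) :
    k * M.card ≤ H.verts.card := by
  rw [← card_biUnion_matching hu hM]
  apply Finset.card_le_card
  intro x hx
  simp only [Finset.mem_biUnion] at hx
  obtain ⟨e, he, hxe⟩ := hx
  exact edge_subset (hM.1 he) hxe

lemma matchCount_def' (H : FinHypergraph α) (r : ℕ) :
    H.matchCount r = ((MM H).filter (fun M => M.card = r)).card := by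
  unfold matchCount
  congr 1
  ext M
  simp only [mem_filter, mem_powerset, MM]
  tauto

lemma matchingPoly_eq (H : FinHypergraph α) (k : ℕ) :
    H.matchingPoly k
      = ∑ M ∈ MM H, C ((-1 : ℝ) ^ M.card) * X ^ (H.verts.card - k * M.card) := by
  rw [matchingPoly]
  rw [← Finset.sum_fiberwise_of_maps_to (g := fun M : Finset (Finset α) => M.card)
      (t := Finset.range (H.edges.card + 1))
      (fun M hM => by
        rw [Finset.mem_range, Nat.lt_succ_iff]
        exact Finset.card_le_card (Finset.mem_powerset.mp (Finset.mem_filter.mp hM).1))]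
  apply Finset.sum_congr rfl
  intro r hr
  rw [Finset.sum_congr rfl (fun M hM => by
    rw [(Finset.mem_filter.mp hM).2]), Finset.sum_const, matchCount_def']
  rw [nsmul_eq_mul, ← Polynomial.C_eq_natCast, Polynomial.C_mul]
  ring

lemma matchCount_zero (H : FinHypergraph α) : H.matchCount 0 = 1 := by
  unfold matchCount
  have : H.edges.powerset.filter (fun M => M.card = 0 ∧ H.IsMatching M) = {∅} := by
    ext M
    simp only [mem_filter, mem_powerset, Finset.mem_singleton, Finset.card_eq_zero]
    constructor
    · rintro ⟨-, h, -⟩; exact h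
    · rintro rfl; exact ⟨Finset.empty_subset _, rfl, empty_isMatching H⟩
  rw [this, Finset.card_singleton]

lemma matchingPoly_of_edges_empty {H : FinHypergraph α} (h : H.edges = ∅) (k : ℕ) :
    H.matchingPoly k = X ^ H.verts.card := by
  rw [matchingPoly, h]
  simp [matchCount_zero]

lemma edges_empty_of_verts_empty {H : FinHypergraph α} {k : ℕ} (hu : H.IsUniform k)
    (hk : 1 ≤ k) (h : H.verts = ∅) : H.edges = ∅ := by
  rw [Finset.eq_empty_iff_forall_notMem]
  intro e he
  have h1 := hu e he
  have h2 : e ⊆ ∅ := h ▸ edge_subset he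
  rw [Finset.subset_empty] at h2
  subst h2
  simp at h1
  omega

lemma matchingPoly_of_verts_empty {H : FinHypergraph α} {k : ℕ} (hu : H.IsUniform k)
    (hk : 1 ≤ k) (h : H.verts = ∅) : H.matchingPoly k = 1 := by
  rw [matchingPoly_of_edges_empty (edges_empty_of_verts_empty hu hk h), h]
  simp

end FinHypergraph
namespace FinHypergraph

open Polynomial Finset

variable {α : Type*} [DecidableEq α]

lemma natDegree_matchingPoly_le (H : FinHypergraph α) (k : ℕ) :
    (H.matchingPoly k).natDegree ≤ H.verts.card := by
  rw [matchingPoly]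
  apply Polynomial.natDegree_sum_le_of_forall_le
  intro r hr
  exact (Polynomial.natDegree_C_mul_le _ _).trans
    (by rw [Polynomial.natDegree_X_pow]; exact Nat.sub_le _ _)

lemma coeff_matchingPoly_card {H : FinHypergraph α} {k : ℕ} (hu : H.IsUniform k)
    (hk : 1 ≤ k) : (H.matchingPoly k).coeff H.verts.card = 1 := by
  by_cases hV : H.verts = ∅
  · rw [matchingPoly_of_verts_empty hu hk hV, hV]
    simp
  · have hn : 1 ≤ H.verts.card := Finset.card_pos.mpr (Finset.nonempty_iff_ne_empty.mpr hV)
    rw [matchingPoly, Polynomial.finset_sum_coeff]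
    rw [Finset.sum_eq_single 0]
    · simp [matchCount_zero]
    · intro r hr hr0
      rw [Polynomial.coeff_C_mul, Polynomial.coeff_X_pow, if_neg, mul_zero]
      have : 1 ≤ k * r := Nat.one_le_iff_ne_zero.mpr (by positivity)
      omega
    · intro h
      exact absurd (Finset.mem_range.mpr (Nat.succ_pos _)) h

lemma monic_matchingPoly {H : FinHypergraph α} {k : ℕ} (hu : H.IsUniform k)
    (hk : 1 ≤ k) : (H.matchingPoly k).Monic :=
  Polynomial.monic_of_natDegree_le_of_coeff_eq_one _ (natDegree_matchingPoly_le H k)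
    (coeff_matchingPoly_card hu hk)

lemma natDegree_matchingPoly {H : FinHypergraph α} {k : ℕ} (hu : H.IsUniform k)
    (hk : 1 ≤ k) : (H.matchingPoly k).natDegree = H.verts.card := by
  apply le_antisymm (natDegree_matchingPoly_le H k)
  apply Polynomial.le_natDegree_of_ne_zero
  rw [coeff_matchingPoly_card hu hk]
  exact one_ne_zero

lemma matchingPoly_ne_zero {H : FinHypergraph α} {k : ℕ} (hu : H.IsUniform k)
    (hk : 1 ≤ k) : H.matchingPoly k ≠ 0 :=
  (monic_matchingPoly hu hk).ne_zero

end FinHypergraph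
namespace FinHypergraph

open Polynomial Finset

variable {α : Type*} [DecidableEq α]

lemma MM_delete_singleton (H : FinHypergraph α) (v : α) :
    MM (H.delete {v}) = (MM H).filter (fun M => ∀ e ∈ M, v ∉ e) := by
  ext M
  simp only [mem_MM, mem_filter, IsMatching, delete_edges]
  constructor
  · rintro ⟨hsub, hpair⟩
    refine ⟨⟨fun f hf => (mem_filter.mp (hsub hf)).1, hpair⟩, fun e heM => ?_⟩
    have := (mem_filter.mp (hsub heM)).2
    simpa [Finset.disjoint_singleton_right] using this
  · rintro ⟨⟨hsub, hpair⟩, hv⟩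
    refine ⟨fun f hf => mem_filter.mpr ⟨hsub hf, ?_⟩, hpair⟩
    simpa [Finset.disjoint_singleton_right] using hv f hf

lemma verts_card_delete_singleton {H : FinHypergraph α} {v : α} (hv : v ∈ H.verts) :
    (H.delete {v}).verts.card = H.verts.card - 1 := by
  simp [Finset.card_sdiff_of_subset (Finset.singleton_subset_iff.mpr hv)]

lemma verts_card_delete_edge {H : FinHypergraph α} {k : ℕ} (hu : H.IsUniform k)
    {e : Finset α} (he : e ∈ H.edges) :
    (H.delete e).verts.card = H.verts.card - k := by
  simp [Finset.card_sdiff_of_subset (edge_subset he), hu e he]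

lemma matchingPoly_recursion {H : FinHypergraph α} {k : ℕ} (hk : 1 ≤ k) (hu : H.IsUniform k)
    {v : α} (hv : v ∈ H.verts) :
    H.matchingPoly k = X * (H.delete {v}).matchingPoly k
      - ∑ e ∈ H.edges.filter (fun e => v ∈ e), (H.delete e).matchingPoly k := by
  have hn1 : 1 ≤ H.verts.card := Finset.card_pos.mpr ⟨v, hv⟩
  have part1 : X * (H.delete {v}).matchingPoly k
      = ∑ M ∈ (MM H).filter (fun M => ∀ e ∈ M, v ∉ e),
          C ((-1 : ℝ) ^ M.card) * X ^ (H.verts.card - k * M.card) := by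
    rw [matchingPoly_eq, ← MM_delete_singleton, Finset.mul_sum]
    apply Finset.sum_congr rfl
    intro M hM
    have hle : k * M.card ≤ H.verts.card - 1 := by
      have := k_mul_card_le (delete_uniform hu {v}) (mem_MM.mp hM)
      rwa [verts_card_delete_singleton hv] at this
    rw [verts_card_delete_singleton hv]
    rw [show H.verts.card - k * M.card = ((H.verts.card - 1) - k * M.card) + 1 by omega,
      pow_succ]
    ring
  have inner : ∀ e ∈ H.edges.filter (fun e => v ∈ e),
      ∑ M ∈ (MM H).filter (fun M => e ∈ M),
          C ((-1 : ℝ) ^ M.card) * X ^ (H.verts.card - k * M.card)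
        = - (H.delete e).matchingPoly k := by
    intro e he
    obtain ⟨heE, hve⟩ := mem_filter.mp he
    have hecard : e.card = k := hu e heE
    have hepos : e.Nonempty := Finset.card_pos.mp (by omega)
    have hkn : k ≤ H.verts.card := by
      calc k = e.card := hecard.symm
        _ ≤ H.verts.card := Finset.card_le_card (edge_subset heE)
    have hnotin : ∀ M' ∈ MM (H.delete e), e ∉ M' := by
      intro M' hM' heM'
      have := (mem_MM.mp hM').1 heM'
      rw [delete_edges, mem_filter] at this
      have he0 : e = ∅ := by simpa using this.2
      exact (Finset.nonempty_iff_ne_empty.mp hepos) he0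
    rw [matchingPoly_eq, ← Finset.sum_neg_distrib]
    refine Finset.sum_nbij' (fun M => M.erase e) (fun M' => insert e M') ?_ ?_ ?_ ?_ ?_
    · -- maps to
      intro M hM
      obtain ⟨hMM, heM⟩ := mem_filter.mp hM
      have hmat := mem_MM.mp hMM
      rw [mem_MM]
      constructor
      · intro f hf
        obtain ⟨hfe, hfM⟩ := Finset.mem_erase.mp hf
        rw [delete_edges, mem_filter]
        exact ⟨hmat.1 hfM, hmat.2 f hfM e heM hfe⟩
      · intro f hf g hg
        exact hmat.2 f (Finset.mem_of_mem_erase hf) g (Finset.mem_of_mem_erase hg)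
    · -- maps back
      intro M' hM'
      have hmat := mem_MM.mp hM'
      rw [mem_filter, mem_MM]
      refine ⟨⟨?_, ?_⟩, Finset.mem_insert_self e M'⟩
      · intro f hf
        rcases Finset.mem_insert.mp hf with rfl | hfM
        · exact heE
        · exact (mem_filter.mp (hmat.1 hfM)).1
      · intro f hf g hg hfg
        rcases Finset.mem_insert.mp hf with rfl | hfM <;>
          rcases Finset.mem_insert.mp hg with rfl | hgM
        · exact absurd rfl hfg
        · exact (Finset.disjoint_right.mpr
            (fun x hx => Finset.disjoint_left.mp
              ((mem_filter.mp (hmat.1 hgM)).2) hx)).symm |>.symm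
        · exact (mem_filter.mp (hmat.1 hfM)).2
        · exact hmat.2 f hfM g hgM hfg
    · intro M hM
      exact Finset.insert_erase (mem_filter.mp hM).2
    · intro M' hM'
      exact Finset.erase_insert (hnotin M' hM')
    · -- values
      intro M hM
      obtain ⟨hMM, heM⟩ := mem_filter.mp hM
      have hmat := mem_MM.mp hMM
      have hm1 : 1 ≤ M.card := Finset.card_pos.mpr ⟨e, heM⟩
      have hkm : k * M.card ≤ H.verts.card := k_mul_card_le hu hmat
      rw [Finset.card_erase_of_mem heM, verts_card_delete_edge hu heE]
      rw [show M.card = (M.card - 1) + 1 by omega]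
      rw [show (M.card - 1 + 1) - 1 = M.card - 1 by omega, pow_succ]
      have hmul : k * (M.card - 1 + 1) = k * (M.card - 1) + k := by rw [Nat.mul_succ]
      have hmul2 : k * (M.card - 1) + k ≤ H.verts.card := by
        rw [← hmul, show M.card - 1 + 1 = M.card by omega]; exact hkm
      rw [show H.verts.card - k * (M.card - 1 + 1)
          = (H.verts.card - k) - k * (M.card - 1) by omega]
      rw [Polynomial.C_mul, map_neg, map_one]
      ring
  have hbad : (MM H).filter (fun M => ¬ ∀ e ∈ M, v ∉ e)
      = (H.edges.filter (fun e => v ∈ e)).biUnion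
          (fun e => (MM H).filter (fun M => e ∈ M)) := by
    ext M
    simp only [mem_filter, mem_biUnion, not_forall, not_not, exists_prop]
    constructor
    · rintro ⟨hM, e, heM, hve⟩
      exact ⟨e, ⟨(mem_MM.mp hM).1 heM, hve⟩, hM, heM⟩
    · rintro ⟨e, ⟨heE, hve⟩, hM, heM⟩
      exact ⟨hM, e, heM, hve⟩
  have hdisj : Set.PairwiseDisjoint ↑(H.edges.filter (fun e => v ∈ e))
      (fun e => (MM H).filter (fun M => e ∈ M)) := by
    intro e1 h1 e2 h2 hne
    simp only [Finset.coe_filter, Set.mem_setOf_eq] at h1 h2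
    apply Finset.disjoint_left.mpr
    intro M hM1 hM2
    obtain ⟨hMM, he1⟩ := mem_filter.mp hM1
    obtain ⟨-, he2⟩ := mem_filter.mp hM2
    have := (mem_MM.mp hMM).2 e1 he1 e2 he2 hne
    exact Finset.disjoint_left.mp this h1.2 h2.2
  calc H.matchingPoly k
      = ∑ M ∈ MM H, C ((-1 : ℝ) ^ M.card) * X ^ (H.verts.card - k * M.card) :=
        matchingPoly_eq H k
    _ = (∑ M ∈ (MM H).filter (fun M => ∀ e ∈ M, v ∉ e), C ((-1 : ℝ) ^ M.card)
          * X ^ (H.verts.card - k * M.card))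
        + ∑ M ∈ (MM H).filter (fun M => ¬ ∀ e ∈ M, v ∉ e), C ((-1 : ℝ) ^ M.card)
          * X ^ (H.verts.card - k * M.card) :=
        (Finset.sum_filter_add_sum_filter_not _ _ _).symm
    _ = X * (H.delete {v}).matchingPoly k
        + ∑ e ∈ H.edges.filter (fun e => v ∈ e),
            ∑ M ∈ (MM H).filter (fun M => e ∈ M), C ((-1 : ℝ) ^ M.card)
              * X ^ (H.verts.card - k * M.card) := by
        rw [part1, hbad, Finset.sum_biUnion hdisj]
    _ = X * (H.delete {v}).matchingPoly k
        - ∑ e ∈ H.edges.filter (fun e => v ∈ e), (H.delete e).matchingPoly k := by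
        rw [Finset.sum_congr rfl inner, Finset.sum_neg_distrib, sub_eq_add_neg]

end FinHypergraph
namespace FinHypergraph

open Polynomial Finset

variable {α : Type*} [DecidableEq α]

lemma derivative_matchingPoly {H : FinHypergraph α} {k : ℕ} (hk : 1 ≤ k)
    (hu : H.IsUniform k) :
    Polynomial.derivative (H.matchingPoly k)
      = ∑ v ∈ H.verts, (H.delete {v}).matchingPoly k := by
  have hcount : ∀ M ∈ MM H,
      (H.verts.filter (fun v => ∀ e ∈ M, v ∉ e)).card = H.verts.card - k * M.card := by
    intro M hM
    have hmat := mem_MM.mp hM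
    have hfe : H.verts.filter (fun v => ∀ e ∈ M, v ∉ e)
        = H.verts \ M.biUnion (fun e => e) := by
      ext x
      simp only [mem_filter, mem_sdiff, Finset.mem_biUnion, not_exists]
      tauto
    have hsub : M.biUnion (fun e => e) ⊆ H.verts := by
      intro x hx
      obtain ⟨e, he, hxe⟩ := Finset.mem_biUnion.mp hx
      exact edge_subset (hmat.1 he) hxe
    rw [hfe, Finset.card_sdiff_of_subset hsub, card_biUnion_matching hu hmat]
  have hR : ∀ v ∈ H.verts, (H.delete {v}).matchingPoly k
      = ∑ M ∈ MM H, (if ∀ e ∈ M, v ∉ e then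
          C ((-1 : ℝ) ^ M.card) * X ^ ((H.verts.card - 1) - k * M.card) else 0) := by
    intro v hv
    rw [matchingPoly_eq, MM_delete_singleton, verts_card_delete_singleton hv,
      Finset.sum_filter]
  have hRHS : ∑ v ∈ H.verts, (H.delete {v}).matchingPoly k
      = ∑ M ∈ MM H, (H.verts.card - k * M.card)
          • (C ((-1 : ℝ) ^ M.card) * X ^ ((H.verts.card - 1) - k * M.card)) := by
    rw [Finset.sum_congr rfl hR, Finset.sum_comm]
    apply Finset.sum_congr rfl
    intro M hM
    rw [← Finset.sum_filter, Finset.sum_const, hcount M hM]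
  rw [hRHS, matchingPoly_eq, Polynomial.derivative_sum]
  apply Finset.sum_congr rfl
  intro M hM
  rw [Polynomial.derivative_C_mul_X_pow]
  rw [Nat.sub_right_comm]
  rw [nsmul_eq_mul, ← Polynomial.C_eq_natCast, Polynomial.C_mul]
  ring

lemma matchingPoly_split {H : FinHypergraph α} {k : ℕ} (hk : 1 ≤ k) (hu : H.IsUniform k)
    {A B : Finset α} (hV : H.verts = A ∪ B) (hAB : Disjoint A B)
    (hE : ∀ e ∈ H.edges, e ⊆ A ∨ e ⊆ B) :
    H.matchingPoly k = (H.delete B).matchingPoly k * (H.delete A).matchingPoly k := by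
  have hVA : (H.delete B).verts = A := by
    rw [delete_verts, hV]
    ext x
    simp only [mem_sdiff, mem_union]
    constructor
    · rintro ⟨h1 | h1, h2⟩
      · exact h1
      · exact absurd h1 h2
    · intro hx
      exact ⟨Or.inl hx, Finset.disjoint_left.mp hAB hx⟩
  have hVB : (H.delete A).verts = B := by
    rw [delete_verts, hV]
    ext x
    simp only [mem_sdiff, mem_union]
    constructor
    · rintro ⟨h1 | h1, h2⟩
      · exact absurd h1 h2
      · exact h1
    · intro hx
      exact ⟨Or.inr hx, Finset.disjoint_right.mp hAB hx⟩
  have hne : ∀ e ∈ H.edges, e.Nonempty := by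
    intro e he
    rw [← Finset.card_pos, hu e he]
    omega
  have hfa : ∀ f ∈ (H.delete B).edges, f ⊆ A := by
    intro f hf
    have := (mem_delete_edges.mp hf).2
    rwa [← delete_verts, hVA] at this
  have hfb : ∀ f ∈ (H.delete A).edges, f ⊆ B := by
    intro f hf
    have := (mem_delete_edges.mp hf).2
    rwa [← delete_verts, hVB] at this
  have hMA : ∀ M ∈ MM H, (M.filter (fun e => e ⊆ A)) ∈ MM (H.delete B) := by
    intro M hM
    have hmat := mem_MM.mp hM
    rw [mem_MM]
    constructor
    · intro f hf
      obtain ⟨hfM, hfA⟩ := mem_filter.mp hf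
      rw [delete_edges, mem_filter]
      exact ⟨hmat.1 hfM, Finset.disjoint_of_subset_left hfA hAB⟩
    · intro f hf g hg
      exact hmat.2 f (mem_filter.mp hf).1 g (mem_filter.mp hg).1
  have hMB : ∀ M ∈ MM H, (M.filter (fun e => e ⊆ B)) ∈ MM (H.delete A) := by
    intro M hM
    have hmat := mem_MM.mp hM
    rw [mem_MM]
    constructor
    · intro f hf
      obtain ⟨hfM, hfB⟩ := mem_filter.mp hf
      rw [delete_edges, mem_filter]
      exact ⟨hmat.1 hfM, Finset.disjoint_of_subset_left hfB hAB.symm⟩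
    · intro f hf g hg
      exact hmat.2 f (mem_filter.mp hf).1 g (mem_filter.mp hg).1
  have hnotboth : ∀ e ∈ H.edges, e ⊆ A → e ⊆ B → False := by
    intro e he h1 h2
    obtain ⟨x, hx⟩ := hne e he
    exact Finset.disjoint_left.mp hAB (h1 hx) (h2 hx)
  have hunion : ∀ M ∈ MM H, M.filter (fun e => e ⊆ A) ∪ M.filter (fun e => e ⊆ B) = M := by
    intro M hM
    have hmat := mem_MM.mp hM
    rw [← Finset.filter_or, Finset.filter_true_of_mem]
    intro e heM
    exact hE e (hmat.1 heM)
  have hdisjf : ∀ M ∈ MM H,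
      Disjoint (M.filter (fun e => e ⊆ A)) (M.filter (fun e => e ⊆ B)) := by
    intro M hM
    have hmat := mem_MM.mp hM
    rw [Finset.disjoint_left]
    intro e h1 h2
    exact hnotboth e (hmat.1 (mem_filter.mp h1).1) (mem_filter.mp h1).2 (mem_filter.mp h2).2
  have hcards : A.card + B.card = H.verts.card := by
    rw [hV, Finset.card_union_of_disjoint hAB]
  rw [matchingPoly_eq, matchingPoly_eq, matchingPoly_eq, Finset.sum_mul_sum,
    ← Finset.sum_product']
  refine Finset.sum_nbij'
    (fun M => (M.filter (fun e => e ⊆ A), M.filter (fun e => e ⊆ B)))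
    (fun p => p.1 ∪ p.2) ?_ ?_ ?_ ?_ ?_
  · intro M hM
    rw [Finset.mem_product]
    exact ⟨hMA M hM, hMB M hM⟩
  · intro p hp
    rw [Finset.mem_product] at hp
    have h1 := mem_MM.mp hp.1
    have h2 := mem_MM.mp hp.2
    rw [mem_MM]
    constructor
    · intro f hf
      rcases Finset.mem_union.mp hf with h | h
      · exact (mem_delete_edges.mp (h1.1 h)).1
      · exact (mem_delete_edges.mp (h2.1 h)).1
    · intro f hf g hg hfg
      rcases Finset.mem_union.mp hf with hf' | hf' <;>
        rcases Finset.mem_union.mp hg with hg' | hg'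
      · exact h1.2 f hf' g hg' hfg
      · exact Finset.disjoint_of_subset_left (hfa f (h1.1 hf'))
          (Finset.disjoint_of_subset_right (hfb g (h2.1 hg')) hAB)
      · exact Finset.disjoint_of_subset_left (hfb f (h2.1 hf'))
          (Finset.disjoint_of_subset_right (hfa g (h1.1 hg')) hAB.symm)
      · exact h2.2 f hf' g hg' hfg
  · intro M hM
    exact hunion M hM
  · intro p hp
    rw [Finset.mem_product] at hp
    have h1 := mem_MM.mp hp.1
    have h2 := mem_MM.mp hp.2
    have e1 : (p.1 ∪ p.2).filter (fun e => e ⊆ A) = p.1 := by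
      ext f
      simp only [mem_filter, Finset.mem_union]
      constructor
      · rintro ⟨hf | hf, hfA⟩
        · exact hf
        · exact absurd hfA (fun h =>
            hnotboth f (mem_delete_edges.mp (h2.1 hf)).1 h (hfb f (h2.1 hf)))
      · intro hf
        exact ⟨Or.inl hf, hfa f (h1.1 hf)⟩
    have e2 : (p.1 ∪ p.2).filter (fun e => e ⊆ B) = p.2 := by
      ext f
      simp only [mem_filter, Finset.mem_union]
      constructor
      · rintro ⟨hf | hf, hfB⟩
        · exact absurd hfB (fun h =>
            hnotboth f (mem_delete_edges.mp (h1.1 hf)).1 (hfa f (h1.1 hf)) h)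
        · exact hf
      · intro hf
        exact ⟨Or.inr hf, hfb f (h2.1 hf)⟩
    rw [Prod.ext_iff]
    exact ⟨e1, e2⟩
  · intro M hM
    have hmat := mem_MM.mp hM
    have hcard : (M.filter (fun e => e ⊆ A)).card + (M.filter (fun e => e ⊆ B)).card
        = M.card := by
      rw [← Finset.card_union_of_disjoint (hdisjf M hM), hunion M hM]
    have hka : k * (M.filter (fun e => e ⊆ A)).card ≤ A.card := by
      have := k_mul_card_le (delete_uniform hu B) (mem_MM.mp (hMA M hM))
      rwa [hVA] at this
    have hkb : k * (M.filter (fun e => e ⊆ B)).card ≤ B.card := by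
      have := k_mul_card_le (delete_uniform hu A) (mem_MM.mp (hMB M hM))
      rwa [hVB] at this
    rw [show (H.delete B).verts.card = A.card from by rw [hVA],
      show (H.delete A).verts.card = B.card from by rw [hVB]]
    set a := (M.filter (fun e => e ⊆ A)).card with ha
    set b := (M.filter (fun e => e ⊆ B)).card with hb
    have hmulab : k * (a + b) = k * a + k * b := by rw [Nat.mul_add]
    rw [← hcard]
    rw [show H.verts.card - k * (a + b) = (A.card - k * a) + (B.card - k * b) by omega]
    rw [pow_add, pow_add, Polynomial.C_mul]
    ring

end FinHypergraph
namespace FinHypergraph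

open Polynomial Finset

variable {α : Type*} [DecidableEq α]

/-- The largest real root of the matching polynomial (0 if there is none). -/
noncomputable def tv (H : FinHypergraph α) (k : ℕ) : ℝ :=
  sSup {x : ℝ | (H.matchingPoly k).IsRoot x}

lemma rts_finite {H : FinHypergraph α} {k : ℕ} (hu : H.IsUniform k) (hk : 1 ≤ k) :
    {x : ℝ | (H.matchingPoly k).IsRoot x}.Finite :=
  Polynomial.finite_setOf_isRoot (matchingPoly_ne_zero hu hk)

lemma rts_bddAbove {H : FinHypergraph α} {k : ℕ} (hu : H.IsUniform k) (hk : 1 ≤ k) :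
    BddAbove {x : ℝ | (H.matchingPoly k).IsRoot x} :=
  (rts_finite hu hk).bddAbove

lemma root_le_tv {H : FinHypergraph α} {k : ℕ} (hu : H.IsUniform k) (hk : 1 ≤ k)
    {x : ℝ} (hx : (H.matchingPoly k).IsRoot x) : x ≤ tv H k :=
  le_csSup (rts_bddAbove hu hk) hx

lemma tv_isRoot {H : FinHypergraph α} {k : ℕ} (hu : H.IsUniform k) (hk : 1 ≤ k)
    (hne : {x : ℝ | (H.matchingPoly k).IsRoot x}.Nonempty) :
    (H.matchingPoly k).IsRoot (tv H k) :=
  hne.csSup_mem (rts_finite hu hk)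

lemma tendsto_matchingPoly {H : FinHypergraph α} {k : ℕ} (hu : H.IsUniform k) (hk : 1 ≤ k)
    (hV : H.verts.Nonempty) :
    Filter.Tendsto (fun x => (H.matchingPoly k).eval x) Filter.atTop Filter.atTop := by
  apply Polynomial.tendsto_atTop_of_leadingCoeff_nonneg
  · rw [Polynomial.degree_eq_natDegree (matchingPoly_ne_zero hu hk),
      natDegree_matchingPoly hu hk]
    exact_mod_cast Finset.card_pos.mpr hV
  · rw [(monic_matchingPoly hu hk).leadingCoeff]
    exact zero_le_one

/-- If the polynomial is ≤ 0 somewhere, there is a real root to the right. -/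
lemma exists_root_ge {H : FinHypergraph α} {k : ℕ} (hu : H.IsUniform k) (hk : 1 ≤ k)
    {x : ℝ} (hx : (H.matchingPoly k).eval x ≤ 0) :
    ∃ z, x ≤ z ∧ (H.matchingPoly k).IsRoot z := by
  by_cases hV : H.verts = ∅
  · rw [matchingPoly_of_verts_empty hu hk hV] at hx
    norm_num at hx
  · have hV' : H.verts.Nonempty := Finset.nonempty_iff_ne_empty.mpr hV
    have ht := tendsto_matchingPoly hu hk hV'
    obtain ⟨y, hy0, hyx⟩ : ∃ y, 0 < (H.matchingPoly k).eval y ∧ x ≤ y := by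
      have := (ht.eventually_gt_atTop 0).and (Filter.eventually_ge_atTop x)
      obtain ⟨y, h1, h2⟩ := this.exists
      exact ⟨y, h1, h2⟩
    have hcont : ContinuousOn (fun t => (H.matchingPoly k).eval t) (Set.Icc x y) :=
      (Polynomial.continuous _).continuousOn
    have h0 : (0 : ℝ) ∈ Set.Icc ((H.matchingPoly k).eval x) ((H.matchingPoly k).eval y) :=
      ⟨hx, le_of_lt hy0⟩
    obtain ⟨z, hz, hz0⟩ := intermediate_value_Icc hyx hcont h0
    exact ⟨z, hz.1, hz0⟩

lemma eval_pos_of_tv_lt {H : FinHypergraph α} {k : ℕ} (hu : H.IsUniform k) (hk : 1 ≤ k)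
    {x : ℝ} (hx : tv H k < x) : 0 < (H.matchingPoly k).eval x := by
  by_contra h
  push_neg at h
  obtain ⟨z, hxz, hz⟩ := exists_root_ge hu hk h
  exact absurd (root_le_tv hu hk hz) (by linarith)

lemma eval_nonneg_of_tv_le {H : FinHypergraph α} {k : ℕ} (hu : H.IsUniform k) (hk : 1 ≤ k)
    {x : ℝ} (hx : tv H k ≤ x) : 0 ≤ (H.matchingPoly k).eval x := by
  by_contra h
  push_neg at h
  obtain ⟨z, hxz, hz⟩ := exists_root_ge hu hk (le_of_lt h)
  have hzle := root_le_tv hu hk hz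
  have hzx : z = x := le_antisymm (by linarith) hxz
  rw [hzx] at hz
  exact absurd hz.eq_zero (by linarith [h])

lemma tv_of_verts_empty {H : FinHypergraph α} {k : ℕ} (hu : H.IsUniform k) (hk : 1 ≤ k)
    (hV : H.verts = ∅) : tv H k = 0 := by
  unfold tv
  have : {x : ℝ | (H.matchingPoly k).IsRoot x} = ∅ := by
    ext x
    simp only [Set.mem_setOf_eq, Set.mem_empty_iff_false, iff_false]
    rw [matchingPoly_of_verts_empty hu hk hV]
    simp [Polynomial.IsRoot]
  rw [this, Real.sSup_empty]

/-- Main induction: nonnegativity, root existence, and monotonicity of `tv` under deletion. -/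
lemma tv_main (k : ℕ) (hk : 1 ≤ k) :
    ∀ N : ℕ, ∀ H : FinHypergraph α, H.verts.card = N → H.IsUniform k →
      (0 ≤ tv H k) ∧
      (H.verts.Nonempty → (H.matchingPoly k).IsRoot (tv H k)) ∧
      (∀ W : Finset α, tv (H.delete W) k ≤ tv H k) := by
  intro N
  induction N using Nat.strong_induction_on with
  | _ N IH =>
    intro H hN hu
    by_cases hV : H.verts = ∅
    · refine ⟨le_of_eq (tv_of_verts_empty hu hk hV).symm, ?_, ?_⟩
      · intro h; exact absurd hV (Finset.nonempty_iff_ne_empty.mp h)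
      · intro W
        have h2 : (H.delete W).verts = ∅ := by rw [delete_verts, hV]; simp
        rw [tv_of_verts_empty (delete_uniform hu W) hk h2,
          tv_of_verts_empty hu hk hV]
    · have hV' : H.verts.Nonempty := Finset.nonempty_iff_ne_empty.mpr hV
      have hN1 : 1 ≤ N := hN ▸ Finset.card_pos.mpr hV'
      -- For every vertex: a root of μ(H) exists at or above tv (H - v), which is ≥ 0
      have step : ∀ v ∈ H.verts,
          ∃ z, tv (H.delete {v}) k ≤ z ∧ 0 ≤ z ∧ (H.matchingPoly k).IsRoot z := by
        intro v hv
        have hcard : (H.delete {v}).verts.card = N - 1 := by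
          rw [verts_card_delete_singleton hv, hN]
        have IHv := IH (N - 1) (by omega) (H.delete {v}) hcard (delete_uniform hu {v})
        set θ := tv (H.delete {v}) k with hθ
        have hθ0 : 0 ≤ θ := IHv.1
        have hterm1 : θ * (((H.delete {v}).matchingPoly k).eval θ) = 0 := by
          by_cases hVv : (H.delete {v}).verts = ∅
          · have : θ = 0 := tv_of_verts_empty (delete_uniform hu {v}) hk hVv
            rw [this, zero_mul]
          · have := IHv.2.1 (Finset.nonempty_iff_ne_empty.mpr hVv)
            rw [Polynomial.IsRoot] at this
            rw [this, mul_zero]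
        have hterm2 : ∀ e ∈ H.edges.filter (fun e => v ∈ e),
            0 ≤ ((H.delete e).matchingPoly k).eval θ := by
          intro e he
          obtain ⟨heE, hve⟩ := mem_filter.mp he
          have hdel : (H.delete {v}).delete (e \ {v}) = H.delete e := by
            rw [delete_delete]
            apply delete_eq_of_sdiff_eq
            congr 1
            ext x
            simp only [Finset.mem_union, Finset.mem_sdiff, Finset.mem_singleton]
            constructor
            · rintro (rfl | ⟨h1, -⟩)
              · exact hve
              · exact h1
            · intro hx
              by_cases hxv : x = v
              · exact Or.inl hxv
              · exact Or.inr ⟨hx, hxv⟩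
          have hle : tv (H.delete e) k ≤ θ := by
            rw [← hdel]
            exact IHv.2.2 (e \ {v})
          exact eval_nonneg_of_tv_le (delete_uniform hu e) hk hle
        have heval : (H.matchingPoly k).eval θ ≤ 0 := by
          rw [matchingPoly_recursion hk hu hv]
          rw [Polynomial.eval_sub, Polynomial.eval_mul, Polynomial.eval_X,
            Polynomial.eval_finset_sum, hterm1]
          rw [zero_sub, neg_nonpos]
          exact Finset.sum_nonneg hterm2
        obtain ⟨z, hz1, hz2⟩ := exists_root_ge hu hk heval
        exact ⟨z, hz1, le_trans hθ0 hz1, hz2⟩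
      obtain ⟨v0, hv0⟩ := hV'
      obtain ⟨z0, hz01, hz02, hz03⟩ := step v0 hv0
      have htv0 : 0 ≤ tv H k := le_trans hz02 (root_le_tv hu hk hz03)
      have hsingle : ∀ v ∈ H.verts, tv (H.delete {v}) k ≤ tv H k := by
        intro v hv
        obtain ⟨z, hz1, hz2, hz3⟩ := step v hv
        exact le_trans hz1 (root_le_tv hu hk hz3)
      refine ⟨htv0, ?_, ?_⟩
      · intro _
        apply tv_isRoot hu hk
        exact ⟨z0, hz03⟩
      · intro W
        by_cases hWV : Disjoint H.verts W
        · rw [delete_eq_self hWV]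
        · have : ∃ v, v ∈ W ∩ H.verts := by
            rw [Finset.disjoint_left] at hWV
            push_neg at hWV
            obtain ⟨v, h1, h2⟩ := hWV
            exact ⟨v, Finset.mem_inter.mpr ⟨h2, h1⟩⟩
          obtain ⟨v, hvW⟩ := this
          obtain ⟨hvW1, hvW2⟩ := Finset.mem_inter.mp hvW
          have hsplit : H.delete W = (H.delete {v}).delete (W \ {v}) := by
            rw [delete_delete]
            apply delete_eq_of_sdiff_eq
            congr 1
            ext x
            simp only [Finset.mem_union, Finset.mem_sdiff, Finset.mem_singleton]
            constructor
            · intro hx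
              by_cases hxv : x = v
              · exact Or.inl hxv
              · exact Or.inr ⟨hx, hxv⟩
            · rintro (rfl | ⟨h1, -⟩)
              · exact hvW1
              · exact h1
          have hcard : (H.delete {v}).verts.card = N - 1 := by
            rw [verts_card_delete_singleton hvW2, hN]
          have IHv := IH (N - 1) (by omega) (H.delete {v}) hcard (delete_uniform hu {v})
          rw [hsplit]
          exact le_trans (IHv.2.2 (W \ {v})) (hsingle v hvW2)

lemma tv_nonneg {H : FinHypergraph α} {k : ℕ} (hu : H.IsUniform k) (hk : 1 ≤ k) :
    0 ≤ tv H k := (tv_main k hk H.verts.card H rfl hu).1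

lemma tv_delete_le {H : FinHypergraph α} {k : ℕ} (hu : H.IsUniform k) (hk : 1 ≤ k)
    (W : Finset α) : tv (H.delete W) k ≤ tv H k :=
  (tv_main k hk H.verts.card H rfl hu).2.2 W

lemma tv_isRoot' {H : FinHypergraph α} {k : ℕ} (hu : H.IsUniform k) (hk : 1 ≤ k)
    (hV : H.verts.Nonempty) : (H.matchingPoly k).IsRoot (tv H k) :=
  (tv_main k hk H.verts.card H rfl hu).2.1 hV

end FinHypergraph
namespace FinHypergraph

open Polynomial Finset

variable {α : Type*} [DecidableEq α]

lemma delete_singleton_delete (H : FinHypergraph α) {v : α} {W : Finset α} (hv : v ∈ W) :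
    (H.delete {v}).delete (W \ {v}) = H.delete W := by
  rw [delete_delete]
  apply delete_eq_of_sdiff_eq
  congr 1
  ext x
  simp only [Finset.mem_union, Finset.mem_sdiff, Finset.mem_singleton]
  constructor
  · rintro (rfl | ⟨h1, -⟩)
    · exact hv
    · exact h1
  · intro hx
    by_cases hxv : x = v
    · exact Or.inl hxv
    · exact Or.inr ⟨hx, hxv⟩

lemma complex_bound (k : ℕ) (hk : 1 ≤ k) :
    ∀ N : ℕ, ∀ H : FinHypergraph α, H.verts.card = N → H.IsUniform k →
      ∀ z : ℂ, tv H k < ‖z‖ →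
        (Polynomial.aeval z (H.matchingPoly k) ≠ 0 ∧
         ∀ W : Finset α,
           ‖Polynomial.aeval z ((H.delete W).matchingPoly k)‖
             * (H.matchingPoly k).eval (‖z‖)
           ≤ ((H.delete W).matchingPoly k).eval (‖z‖)
             * ‖Polynomial.aeval z (H.matchingPoly k)‖) := by
  intro N
  induction N using Nat.strong_induction_on with
  | _ N IH =>
    intro H hN hu z hz
    by_cases hV : H.verts = ∅
    · constructor
      · rw [matchingPoly_of_verts_empty hu hk hV]
        simp
      · intro W
        have h2 : (H.delete W).verts = ∅ := by rw [delete_verts, hV]; simp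
        rw [matchingPoly_of_verts_empty hu hk hV,
          matchingPoly_of_verts_empty (delete_uniform hu W) hk h2]
        simp
    · have hV' : H.verts.Nonempty := Finset.nonempty_iff_ne_empty.mpr hV
      have hN1 : 1 ≤ N := hN ▸ Finset.card_pos.mpr hV'
      set r := ‖z‖ with hr
      have hEH_pos : 0 < (H.matchingPoly k).eval r := eval_pos_of_tv_lt hu hk hz
      have hEsub_pos : ∀ W : Finset α, 0 < ((H.delete W).matchingPoly k).eval r := by
        intro W
        exact eval_pos_of_tv_lt (delete_uniform hu W) hk
          (lt_of_le_of_lt (tv_delete_le hu hk W) hz)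
      -- the key single-vertex inequality
      have main : ∀ v ∈ H.verts,
          ‖Polynomial.aeval z ((H.delete {v}).matchingPoly k)‖
              * (H.matchingPoly k).eval r
            ≤ ((H.delete {v}).matchingPoly k).eval r
              * ‖Polynomial.aeval z (H.matchingPoly k)‖
          ∧ Polynomial.aeval z (H.matchingPoly k) ≠ 0 := by
        intro v hv
        have hcard : (H.delete {v}).verts.card = N - 1 := by
          rw [verts_card_delete_singleton hv, hN]
        have hzv : tv (H.delete {v}) k < ‖z‖ :=
          lt_of_le_of_lt (tv_delete_le hu hk {v}) hz
        have IHv := IH (N - 1) (by omega) (H.delete {v}) hcard (delete_uniform hu {v}) z hzv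
        have hrec := matchingPoly_recursion hk hu hv
        have hA : Polynomial.aeval z (H.matchingPoly k)
            = z * Polynomial.aeval z ((H.delete {v}).matchingPoly k)
              - ∑ e ∈ H.edges.filter (fun e => v ∈ e),
                  Polynomial.aeval z ((H.delete e).matchingPoly k) := by
          rw [hrec, map_sub, map_mul, map_sum, Polynomial.aeval_X]
        have hE : (H.matchingPoly k).eval r
            = r * ((H.delete {v}).matchingPoly k).eval r
              - ∑ e ∈ H.edges.filter (fun e => v ∈ e),
                  ((H.delete e).matchingPoly k).eval r := by
          rw [hrec, Polynomial.eval_sub, Polynomial.eval_mul, Polynomial.eval_X,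
            Polynomial.eval_finset_sum]
        set Av := ‖Polynomial.aeval z ((H.delete {v}).matchingPoly k)‖ with hAv
        set AH := ‖Polynomial.aeval z (H.matchingPoly k)‖ with hAH
        set Ev := ((H.delete {v}).matchingPoly k).eval r with hEv
        set EH := (H.matchingPoly k).eval r with hEH
        set S1 := ∑ e ∈ H.edges.filter (fun e => v ∈ e),
            ‖Polynomial.aeval z ((H.delete e).matchingPoly k)‖ with hS1
        set S2 := ∑ e ∈ H.edges.filter (fun e => v ∈ e),
            ((H.delete e).matchingPoly k).eval r with hS2
        have hEv_pos : 0 < Ev := hEsub_pos {v}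
        have hAv_pos : 0 < Av := norm_pos_iff.mpr IHv.1
        -- triangle inequality
        have htri : r * Av - S1 ≤ AH := by
          rw [hAH, hA]
          have h1 : ‖z * Polynomial.aeval z ((H.delete {v}).matchingPoly k)‖
              = r * Av := by
            rw [norm_mul]
          have h2 : ‖∑ e ∈ H.edges.filter (fun e => v ∈ e),
              Polynomial.aeval z ((H.delete e).matchingPoly k)‖ ≤ S1 := by
            rw [hS1]
            exact norm_sum_le _ _
          calc r * Av - S1
              ≤ ‖z * Polynomial.aeval z ((H.delete {v}).matchingPoly k)‖
                - ‖∑ e ∈ H.edges.filter (fun e => v ∈ e),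
                    Polynomial.aeval z ((H.delete e).matchingPoly k)‖ := by
                rw [h1]; linarith
            _ ≤ _ := by
                exact norm_sub_norm_le _ _
        -- per-edge bound from IH
        have hS : Ev * S1 ≤ S2 * Av := by
          rw [hS1, hS2, Finset.mul_sum, Finset.sum_mul]
          apply Finset.sum_le_sum
          intro e he
          obtain ⟨heE, hve⟩ := mem_filter.mp he
          have := IHv.2 (e \ {v})
          rw [delete_singleton_delete H hve] at this
          calc Ev * ‖Polynomial.aeval z ((H.delete e).matchingPoly k)‖
              = ‖Polynomial.aeval z ((H.delete e).matchingPoly k)‖ * Ev := by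
                ring
            _ ≤ ((H.delete e).matchingPoly k).eval r * Av := this
        have goal1 : Av * EH ≤ Ev * AH := by
          have step1 : Ev * (r * Av - S1) ≤ Ev * AH :=
            mul_le_mul_of_nonneg_left htri hEv_pos.le
          have step2 : Av * EH = r * Av * Ev - Av * S2 := by
            rw [hE]; ring
          nlinarith [hAv_pos.le]
        constructor
        · exact goal1
        · intro h0
          rw [hAH] at goal1
          rw [h0] at goal1
          simp only [norm_zero, mul_zero] at goal1
          nlinarith [hAv_pos, hEH_pos]
      obtain ⟨v0, hv0⟩ := hV'
      refine ⟨(main v0 hv0).2, ?_⟩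
      intro W
      by_cases hWV : Disjoint H.verts W
      · rw [delete_eq_self hWV]
        exact le_of_eq (mul_comm _ _)
      · have : ∃ v, v ∈ W ∩ H.verts := by
          rw [Finset.disjoint_left] at hWV
          push_neg at hWV
          obtain ⟨v, h1, h2⟩ := hWV
          exact ⟨v, Finset.mem_inter.mpr ⟨h2, h1⟩⟩
        obtain ⟨v, hvW⟩ := this
        obtain ⟨hvW1, hvW2⟩ := Finset.mem_inter.mp hvW
        have hcard : (H.delete {v}).verts.card = N - 1 := by
          rw [verts_card_delete_singleton hvW2, hN]
        have hzv : tv (H.delete {v}) k < ‖z‖ :=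
          lt_of_le_of_lt (tv_delete_le hu hk {v}) hz
        have IHv := IH (N - 1) (by omega) (H.delete {v}) hcard (delete_uniform hu {v}) z hzv
        have hIHW := IHv.2 (W \ {v})
        rw [delete_singleton_delete H hvW1] at hIHW
        obtain ⟨hmain, hne0⟩ := main v hvW2
        set a := ‖Polynomial.aeval z ((H.delete W).matchingPoly k)‖
        set b := ((H.delete W).matchingPoly k).eval r
        set Av := ‖Polynomial.aeval z ((H.delete {v}).matchingPoly k)‖
        set AH := ‖Polynomial.aeval z (H.matchingPoly k)‖
        set Ev := ((H.delete {v}).matchingPoly k).eval r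
        set EH := (H.matchingPoly k).eval r
        have hEv_pos : 0 < Ev := hEsub_pos {v}
        have hb_pos : 0 < b := hEsub_pos W
        have h1 : (a * EH) * Ev ≤ (b * AH) * Ev := by
          nlinarith [mul_le_mul_of_nonneg_right hIHW hEH_pos.le,
            mul_le_mul_of_nonneg_left hmain hb_pos.le]
        exact le_of_mul_le_mul_right h1 hEv_pos

end FinHypergraph
namespace FinHypergraph

open Polynomial Finset

variable {α : Type*} [DecidableEq α]

lemma sdiff_sdiff_self' (s t : Finset α) : s \ (s \ t) = s ∩ t := by
  ext x
  simp only [Finset.mem_sdiff, Finset.mem_inter, not_and, not_not]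
  tauto

lemma finset_powerset_singleton (e : Finset α) :
    ({e} : Finset (Finset α)).powerset = {∅, {e}} := by
  ext M
  simp only [Finset.mem_powerset, Finset.subset_singleton_iff, Finset.mem_insert,
    Finset.mem_singleton]

lemma edges_nonempty_of_root_nonzero {H : FinHypergraph α} {k : ℕ} (hu : H.IsUniform k)
    {x : ℝ} (hx : x ≠ 0) (h0 : (H.matchingPoly k).eval x = 0) : H.edges.Nonempty := by
  rw [Finset.nonempty_iff_ne_empty]
  intro hE
  rw [matchingPoly_of_edges_empty hE, Polynomial.eval_pow, Polynomial.eval_X] at h0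
  exact pow_ne_zero _ hx h0

lemma single_edge_root_one {H : FinHypergraph α} {k : ℕ} (hk : 1 ≤ k) (hu : H.IsUniform k)
    {e : Finset α} (he : e ∈ H.edges) :
    ((H.delete (H.verts \ e)).matchingPoly k).eval 1 = 0 := by
  set S := H.delete (H.verts \ e) with hS
  have hVS : S.verts = e := by
    rw [hS, delete_verts, sdiff_sdiff_self' _ _]
    exact Finset.inter_eq_right.mpr (edge_subset he)
  have hES : S.edges = {e} := by
    ext f
    rw [hS, mem_delete_edges]
    constructor
    · rintro ⟨hf, hfs⟩
      rw [Finset.mem_singleton]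
      have hfe : f ⊆ e := by
        rw [sdiff_sdiff_self' _ _] at hfs
        exact hfs.trans Finset.inter_subset_right
      exact Finset.eq_of_subset_of_card_le hfe (by rw [hu f hf, hu e he])
    · rw [Finset.mem_singleton]
      rintro rfl
      refine ⟨he, ?_⟩
      rw [sdiff_sdiff_self' _ _]
      exact Finset.subset_inter (edge_subset he) Finset.Subset.rfl
  have hmc1 : S.matchCount 1 = 1 := by
    unfold matchCount
    rw [hES, finset_powerset_singleton]
    have : ({∅, {e}} : Finset (Finset (Finset α))).filter
        (fun M => M.card = 1 ∧ S.IsMatching M) = {{e}} := by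
      ext M
      simp only [Finset.mem_filter, Finset.mem_insert, Finset.mem_singleton]
      constructor
      · rintro ⟨rfl | rfl, hc, -⟩
        · simp at hc
        · rfl
      · rintro rfl
        refine ⟨Or.inr rfl, Finset.card_singleton e, ?_, ?_⟩
        · rw [hES]
        · intro f hf g hg hfg
          rw [Finset.mem_singleton] at hf hg
          exact absurd (hf.trans hg.symm) hfg
    rw [this, Finset.card_singleton]
  rw [matchingPoly, hES, Finset.card_singleton]
  rw [Polynomial.eval_finset_sum]
  rw [Finset.sum_range_succ, Finset.sum_range_one]
  simp [matchCount_zero, hmc1]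

lemma one_le_tv {H : FinHypergraph α} {k : ℕ} (hk : 1 ≤ k) (hu : H.IsUniform k)
    (he : H.edges.Nonempty) : 1 ≤ tv H k := by
  obtain ⟨e, he⟩ := he
  have h1 : ((H.delete (H.verts \ e)).matchingPoly k).IsRoot 1 :=
    single_edge_root_one hk hu he
  exact le_trans (root_le_tv (delete_uniform hu _) hk h1) (tv_delete_le hu hk _)

/-- From a real root, extract a connected "component" (as an induced subhypergraph
`G.delete B`) on which the matching polynomial still vanishes, and which is closed
under edges of `G`. -/
lemma zero_component (k : ℕ) (hk : 1 ≤ k) :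
    ∀ N : ℕ, ∀ G : FinHypergraph α, G.verts.card = N → G.IsUniform k →
      ∀ x : ℝ, (G.matchingPoly k).eval x = 0 →
        ∃ B : Finset α, (G.delete B).Connected ∧
          ((G.delete B).matchingPoly k).eval x = 0 ∧
          ∀ e ∈ G.edges, (e ∩ (G.delete B).verts).Nonempty → e ⊆ (G.delete B).verts := by
  intro N
  induction N using Nat.strong_induction_on with
  | _ N IH =>
    intro G hN hu x hx
    by_cases hV : G.verts = ∅
    · rw [matchingPoly_of_verts_empty hu hk hV] at hx
      norm_num at hx
    · obtain ⟨u, hu'⟩ := Finset.nonempty_iff_ne_empty.mpr hV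
      set A := G.verts.filter (fun w => Relation.ReflTransGen G.Adj u w) with hA
      have huA : u ∈ A := mem_filter.mpr ⟨hu', Relation.ReflTransGen.refl⟩
      have hAsub : A ⊆ G.verts := Finset.filter_subset _ _
      have hclosed : ∀ e ∈ G.edges, (e ∩ A).Nonempty → e ⊆ A := by
        rintro e he ⟨a, ha⟩
        obtain ⟨hae, haA⟩ := Finset.mem_inter.mp ha
        intro b hb
        refine mem_filter.mpr ⟨edge_subset he hb, ?_⟩
        exact (mem_filter.mp haA).2.tail ⟨e, he, hae, hb⟩
      have hsplitE : ∀ e ∈ G.edges, e ⊆ A ∨ e ⊆ G.verts \ A := by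
        intro e he
        by_cases h : (e ∩ A).Nonempty
        · exact Or.inl (hclosed e he h)
        · right
          rw [Finset.subset_sdiff]
          refine ⟨edge_subset he, ?_⟩
          rw [Finset.not_nonempty_iff_eq_empty] at h
          rwa [Finset.disjoint_iff_inter_eq_empty]
      have hVsplit : G.verts = A ∪ (G.verts \ A) := (Finset.union_sdiff_of_subset hAsub).symm
      have hABdisj : Disjoint A (G.verts \ A) := by
        rw [Finset.disjoint_left]
        intro a h1 h2
        exact (Finset.mem_sdiff.mp h2).2 h1
      have hsplit := matchingPoly_split hk hu hVsplit hABdisj hsplitE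
      rw [hsplit, Polynomial.eval_mul, mul_eq_zero] at hx
      have hvertsA : (G.delete (G.verts \ A)).verts = A := by
        rw [delete_verts, sdiff_sdiff_self' _ _]
        exact Finset.inter_eq_right.mpr hAsub
      rcases hx with hx0 | hx0
      · -- the component of u works
        refine ⟨G.verts \ A, ?_, hx0, ?_⟩
        · constructor
          · rw [hvertsA]; exact ⟨u, huA⟩
          · have hreach : ∀ b, Relation.ReflTransGen G.Adj u b →
                Relation.ReflTransGen (G.delete (G.verts \ A)).Adj u b := by
              intro b h
              induction h with
              | refl => exact Relation.ReflTransGen.refl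
              | tail hab hbc ih =>
                rename_i w c
                obtain ⟨e, he, hw, hc⟩ := hbc
                have hwA : w ∈ A := mem_filter.mpr ⟨edge_subset he hw, hab⟩
                have heA : e ⊆ A := hclosed e he ⟨w, Finset.mem_inter.mpr ⟨hw, hwA⟩⟩
                have he' : e ∈ (G.delete (G.verts \ A)).edges := by
                  rw [delete_edges, mem_filter]
                  exact ⟨he, Finset.disjoint_of_subset_left heA hABdisj⟩
                exact ih.tail ⟨e, he', hw, hc⟩
            have hsymm : Symmetric (G.delete (G.verts \ A)).Adj := fun _ _ h => adj_symm h
            intro a ha b hb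
            rw [hvertsA] at ha hb
            have h1 := hreach a (mem_filter.mp ha).2
            have h2 := hreach b (mem_filter.mp hb).2
            exact Relation.ReflTransGen.trans
              (@Std.Symm.symm _ _ (@Relation.ReflTransGen.stdSymm _ _ ⟨fun _ _ h => hsymm h⟩) _ _ h1) h2
        · rw [hvertsA]
          exact hclosed
      · -- recurse on the rest
        have hcard : (G.delete A).verts.card < N := by
          rw [← hN, delete_verts]
          exact Finset.card_lt_card (Finset.sdiff_ssubset hAsub ⟨u, huA⟩)
        obtain ⟨B', hconn, hzero, hclos⟩ := IH _ hcard (G.delete A) rfl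
          (delete_uniform hu A) x hx0
        rw [delete_delete] at hconn hzero hclos
        refine ⟨A ∪ B', hconn, hzero, ?_⟩
        intro e he hint
        have hCsub : (G.delete (A ∪ B')).verts ⊆ G.verts \ A := by
          rw [delete_verts]
          intro y hy
          rw [Finset.mem_sdiff] at hy ⊢
          rw [Finset.mem_union] at hy
          exact ⟨hy.1, fun h => hy.2 (Or.inl h)⟩
        have heB0 : e ⊆ G.verts \ A := by
          rcases hsplitE e he with h | h
          · exfalso
            obtain ⟨y, hy⟩ := hint
            obtain ⟨hy1, hy2⟩ := Finset.mem_inter.mp hy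
            exact (Finset.mem_sdiff.mp (hCsub hy2)).2 (h hy1)
          · exact h
        have he' : e ∈ (G.delete A).edges := by
          rw [delete_edges, mem_filter]
          exact ⟨he, (Finset.subset_sdiff.mp heB0).2⟩
        exact hclos e he' hint

end FinHypergraph
namespace FinHypergraph

open Polynomial Finset

variable {α : Type*} [DecidableEq α]

/-- Strict monotonicity: deleting any vertex of a connected hypergraph with an edge
strictly decreases the largest real root of the matching polynomial. -/
lemma tv_strict (k : ℕ) (hk2 : 2 ≤ k) :
    ∀ N : ℕ, ∀ H : FinHypergraph α, H.verts.card = N → H.IsUniform k →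
      H.Connected → H.edges.Nonempty → ∀ v ∈ H.verts,
        tv (H.delete {v}) k < tv H k := by
  have hk : 1 ≤ k := by omega
  intro N
  induction N using Nat.strong_induction_on with
  | _ N IH =>
    intro H hN hu hconn hE v hv
    set θ := tv H k with hθdef
    have hle : tv (H.delete {v}) k ≤ θ := tv_delete_le hu hk {v}
    by_contra hcon
    push_neg at hcon
    have heq : tv (H.delete {v}) k = θ := le_antisymm hle hcon
    have hθ1 : 1 ≤ θ := one_le_tv hk hu hE
    have hN1 : 1 ≤ N := hN ▸ Finset.card_pos.mpr ⟨v, hv⟩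
    -- tv (H - v) is attained as a root
    have hrootv : ((H.delete {v}).matchingPoly k).IsRoot θ := by
      have hrtsne : {x : ℝ | ((H.delete {v}).matchingPoly k).IsRoot x}.Nonempty := by
        by_contra hem
        rw [Set.not_nonempty_iff_eq_empty] at hem
        have h0 : tv (H.delete {v}) k = 0 := by
          unfold tv
          rw [hem, Real.sSup_empty]
        rw [heq] at h0
        linarith
      have := tv_isRoot (delete_uniform hu {v}) hk hrtsne
      rwa [heq] at this
    -- extract a connected zero component C = (H - v) - B
    obtain ⟨B, hCconn, hCzero, hCclos⟩ := zero_component k hk _ (H.delete {v}) rfl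
      (delete_uniform hu {v}) θ hrootv
    set C := (H.delete {v}).delete B with hC
    have hCuni : C.IsUniform k := delete_uniform (delete_uniform hu {v}) B
    have hCverts_eq : C.verts = H.verts \ ({v} ∪ B) := by
      rw [hC, delete_delete, delete_verts]
    have hCsubHv : C.verts ⊆ H.verts \ {v} := by
      rw [hCverts_eq]
      intro x hx
      rw [Finset.mem_sdiff, Finset.mem_union] at hx
      rw [Finset.mem_sdiff, Finset.mem_singleton]
      exact ⟨hx.1, fun h => hx.2 (Or.inl (Finset.mem_singleton.mpr h))⟩
    have hvC : v ∉ C.verts := by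
      intro h
      have := hCsubHv h
      rw [Finset.mem_sdiff, Finset.mem_singleton] at this
      exact this.2 rfl
    have htvC : tv C k = θ := by
      apply le_antisymm
      · rw [hC, delete_delete]
        exact tv_delete_le hu hk _
      · exact root_le_tv hCuni hk hCzero
    have hCedge : C.edges.Nonempty :=
      edges_nonempty_of_root_nonzero hCuni (by linarith) hCzero
    have hCvne : C.verts.Nonempty := hCconn.1
    have hCcard : C.verts.card < N := by
      have h1 : C.verts.card ≤ (H.verts \ {v}).card := Finset.card_le_card hCsubHv
      have h2 : (H.verts \ {v}).card = N - 1 := by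
        rw [Finset.card_sdiff_of_subset (Finset.singleton_subset_iff.mpr hv),
          Finset.card_singleton, hN]
      omega
    have hCedgesH : ∀ f ∈ C.edges, f ∈ H.edges := by
      intro f hf
      rw [hC, delete_edges, mem_filter, delete_edges, mem_filter] at hf
      exact hf.1.1
    -- find an edge containing v and meeting C
    obtain ⟨e1, he1E, hve1, hint⟩ :
        ∃ e1 ∈ H.edges, v ∈ e1 ∧ (e1 ∩ C.verts).Nonempty := by
      obtain ⟨u0, hu0⟩ := hCvne
      have hu0v : u0 ∈ H.verts := by
        have := hCsubHv hu0
        exact (Finset.mem_sdiff.mp this).1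
      have hreach := hconn.2 u0 hu0v v hv
      have aux : ∀ b, Relation.ReflTransGen H.Adj u0 b →
          b ∈ C.verts ∨ ∃ e1 ∈ H.edges, v ∈ e1 ∧ (e1 ∩ C.verts).Nonempty := by
        intro b h
        induction h with
        | refl => exact Or.inl hu0
        | tail hab hbc ih =>
          rename_i w c
          rcases ih with hw | hdone
          · obtain ⟨e, he, hwe, hce⟩ := hbc
            by_cases hve : v ∈ e
            · exact Or.inr ⟨e, he, hve, ⟨w, Finset.mem_inter.mpr ⟨hwe, hw⟩⟩⟩
            · have he' : e ∈ (H.delete {v}).edges := by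
                rw [delete_edges, mem_filter]
                refine ⟨he, ?_⟩
                rw [Finset.disjoint_singleton_right]
                exact hve
              have := hCclos e he' ⟨w, Finset.mem_inter.mpr ⟨hwe, hw⟩⟩
              exact Or.inl (this hce)
          · exact Or.inr hdone
      rcases aux v hreach with h | h
      · exact absurd h hvC
      · exact h
    obtain ⟨u1, hu1⟩ := hint
    obtain ⟨hu1e, hu1C⟩ := Finset.mem_inter.mp hu1
    have he1sub : e1 ⊆ H.verts := edge_subset he1E
    have hCsubV : C.verts ⊆ H.verts := fun x hx => (Finset.mem_sdiff.mp (hCsubHv hx)).1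
    set W1 := H.verts \ (C.verts ∪ e1) with hW1def
    set H1 := H.delete W1 with hH1
    have hH1verts : H1.verts = C.verts ∪ e1 := by
      rw [hH1, delete_verts, hW1def, sdiff_sdiff_self' _ _]
      apply Finset.inter_eq_right.mpr
      exact Finset.union_subset hCsubV he1sub
    have he1H1 : e1 ∈ H1.edges := by
      rw [hH1, delete_edges, mem_filter]
      refine ⟨he1E, ?_⟩
      rw [Finset.disjoint_left]
      intro x hx hxW
      rw [hW1def, Finset.mem_sdiff] at hxW
      exact hxW.2 (Finset.mem_union_right _ hx)
    have hCeH1 : ∀ f ∈ C.edges, f ∈ H1.edges := by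
      intro f hf
      rw [hH1, delete_edges, mem_filter]
      refine ⟨hCedgesH f hf, ?_⟩
      rw [Finset.disjoint_left]
      intro x hx hxW
      rw [hW1def, Finset.mem_sdiff] at hxW
      exact hxW.2 (Finset.mem_union_left _ (C.edge_sub f hf hx))
    have hH1conn : H1.Connected := by
      constructor
      · rw [hH1verts]
        exact ⟨u1, Finset.mem_union_left _ hu1C⟩
      · have hreach1 : ∀ a ∈ H1.verts, Relation.ReflTransGen H1.Adj u1 a := by
          intro a ha
          rw [hH1verts] at ha
          rcases Finset.mem_union.mp ha with haC | hae
          · have := hCconn.2 u1 hu1C a haC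
            apply Relation.ReflTransGen.mono ?_ u1 a this
            rintro x y ⟨f, hf, hxf, hyf⟩
            exact ⟨f, hCeH1 f hf, hxf, hyf⟩
          · exact Relation.ReflTransGen.single ⟨e1, he1H1, hu1e, hae⟩
        have hsymm : Symmetric H1.Adj := fun _ _ h => adj_symm h
        intro a ha b hb
        exact Relation.ReflTransGen.trans
          (@Std.Symm.symm _ _ (@Relation.ReflTransGen.stdSymm _ _ ⟨fun _ _ h => hsymm h⟩) _ _ (hreach1 a ha)) (hreach1 b hb)
    have htvH1 : tv H1 k ≤ θ := tv_delete_le hu hk W1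
    rcases Finset.eq_empty_or_nonempty W1 with hW1e | hW1ne
    · -- W1 empty: H.verts = C.verts ∪ e1; use the recursion at v
      have hVeq : H.verts = C.verts ∪ e1 := by
        have h1 : H.verts ⊆ C.verts ∪ e1 := by
          intro x hx
          by_contra hxn
          have : x ∈ W1 := by
            rw [hW1def, Finset.mem_sdiff]
            exact ⟨hx, hxn⟩
          rw [hW1e] at this
          exact absurd this (Finset.notMem_empty x)
        exact le_antisymm h1 (Finset.union_subset hCsubV he1sub)
      have hrootH : (H.matchingPoly k).eval θ = 0 := by
        have hrtsne : {x : ℝ | (H.matchingPoly k).IsRoot x}.Nonempty := by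
          by_contra hem
          rw [Set.not_nonempty_iff_eq_empty] at hem
          have h0 : tv H k = 0 := by
            unfold tv
            rw [hem, Real.sSup_empty]
          rw [← hθdef] at h0
          linarith
        exact tv_isRoot hu hk hrtsne
      have hsum0 : ∑ e ∈ H.edges.filter (fun e => v ∈ e),
          ((H.delete e).matchingPoly k).eval θ = 0 := by
        have := matchingPoly_recursion hk hu hv
        have heval : (H.matchingPoly k).eval θ
            = θ * ((H.delete {v}).matchingPoly k).eval θ
              - ∑ e ∈ H.edges.filter (fun e => v ∈ e),
                  ((H.delete e).matchingPoly k).eval θ := by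
          rw [this, Polynomial.eval_sub, Polynomial.eval_mul, Polynomial.eval_X,
            Polynomial.eval_finset_sum]
        rw [hrootH] at heval
        rw [Polynomial.IsRoot] at hrootv
        rw [hrootv, mul_zero, zero_sub] at heval
        linarith
      have hterm0 : ((H.delete e1).matchingPoly k).eval θ = 0 := by
        have hnn : ∀ e ∈ H.edges.filter (fun e => v ∈ e),
            0 ≤ ((H.delete e).matchingPoly k).eval θ := by
          intro e he
          exact eval_nonneg_of_tv_le (delete_uniform hu e) hk (tv_delete_le hu hk e)
        have := (Finset.sum_eq_zero_iff_of_nonneg hnn).mp hsum0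
        exact this e1 (mem_filter.mpr ⟨he1E, hve1⟩)
      have hgez : θ ≤ tv (H.delete e1) k :=
        root_le_tv (delete_uniform hu e1) hk hterm0
      -- but H.delete e1 is a vertex-deleted subhypergraph of C.delete {u1}
      have hkey : (C.delete {u1}).delete e1 = H.delete e1 := by
        have h1 : (C.delete {u1}).delete e1 = H.delete ({v} ∪ (B ∪ ({u1} ∪ e1))) := by
          rw [hC, delete_delete, delete_delete, delete_delete]
        rw [h1]
        apply delete_eq_of_sdiff_eq
        ext x
        simp only [Finset.mem_sdiff, Finset.mem_union, Finset.mem_singleton]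
        constructor
        · rintro ⟨hx, h⟩
          exact ⟨hx, fun he => h (Or.inr (Or.inr (Or.inr he)))⟩
        · rintro ⟨hx, hxe1⟩
          refine ⟨hx, ?_⟩
          have hxC : x ∈ C.verts := by
            rcases Finset.mem_union.mp (hVeq ▸ hx) with h | h
            · exact h
            · exact absurd h hxe1
          rintro (h | h | h | h)
          · exact hvC (h ▸ hxC)
          · rw [hCverts_eq, Finset.mem_sdiff, Finset.mem_union] at hxC
            exact hxC.2 (Or.inr h)
          · exact hxe1 (h ▸ hu1e)
          · exact hxe1 h
      have hlt : tv (C.delete {u1}) k < θ := by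
        rw [← htvC]
        exact IH C.verts.card hCcard C rfl hCuni hCconn hCedge u1 hu1C
      have : tv (H.delete e1) k ≤ tv (C.delete {u1}) k := by
        rw [← hkey]
        exact tv_delete_le (delete_uniform hCuni {u1}) hk e1
      linarith
    · -- W1 nonempty: apply the induction hypothesis to H1
      have hH1card : H1.verts.card < N := by
        rw [← hN, hH1, delete_verts]
        apply Finset.card_lt_card
        apply Finset.sdiff_ssubset ?_ hW1ne
        rw [hW1def]
        exact Finset.sdiff_subset
      have hvH1 : v ∈ H1.verts := by
        rw [hH1verts]
        exact Finset.mem_union_right _ hve1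
      have hstep := IH H1.verts.card hH1card H1 rfl (delete_uniform hu W1)
        hH1conn ⟨e1, he1H1⟩ v hvH1
      -- tv C ≤ tv (H1 - v)
      have hkey : (H1.delete {v}).delete ({v} ∪ B) = C := by
        have h1 : (H1.delete {v}).delete ({v} ∪ B)
            = H.delete ((W1 ∪ {v}) ∪ ({v} ∪ B)) := by
          rw [hH1, delete_delete, delete_delete, Finset.union_assoc]
        have h2 : C = H.delete ({v} ∪ B) := by
          rw [hC, delete_delete]
        rw [h1, h2]
        apply delete_eq_of_sdiff_eq
        ext x
        simp only [Finset.mem_sdiff, Finset.mem_union, Finset.mem_singleton]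
        constructor
        · rintro ⟨hx, h⟩
          refine ⟨hx, ?_⟩
          rintro (h1 | h1)
          · exact h (Or.inr (Or.inl h1))
          · exact h (Or.inr (Or.inr h1))
        · rintro ⟨hx, h⟩
          refine ⟨hx, ?_⟩
          have hxC : x ∈ C.verts := by
            rw [hCverts_eq, Finset.mem_sdiff, Finset.mem_union]
            exact ⟨hx, fun hc => by
              rcases hc with hc | hc
              · exact h (Or.inl (Finset.mem_singleton.mp hc))
              · exact h (Or.inr hc)⟩
          rintro ((h1 | h1) | h1)
          · rw [hW1def, Finset.mem_sdiff] at h1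
            exact h1.2 (Finset.mem_union_left _ hxC)
          · exact h (Or.inl h1)
          · exact h h1
      have hge : θ ≤ tv (H1.delete {v}) k := by
        rw [← htvC, ← hkey]
        exact tv_delete_le (delete_uniform (delete_uniform hu W1) {v}) hk _
      linarith

end FinHypergraph

/-- For a connected `k`-graph with maximum degree `Δ ≥ 2`, the maximum-modulus zero
`λ(H)` of `μ(H,x)` is a positive real root, it is simple (the derivative does not vanish
there), and indeed `Σ_{v∈V(H)} μ(H−v, λ(H)) > 0`. -/
theorem lam_simple_root {α : Type*} [DecidableEq α]
    (H : FinHypergraph α) (k Δ : ℕ) (hk : 2 ≤ k) (hH : H.IsUniform k)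
    (hconn : H.Connected) (hΔ : H.maxDegree Δ) (hΔ2 : 2 ≤ Δ) :
    0 < H.lam k ∧
      (H.matchingPoly k).IsRoot (H.lam k) ∧
      (Polynomial.derivative (H.matchingPoly k)).eval (H.lam k) ≠ 0 ∧
      0 < ∑ v ∈ H.verts, ((H.delete {v}).matchingPoly k).eval (H.lam k) := by
  have hk1 : 1 ≤ k := by omega
  have hE : H.edges.Nonempty := by
    obtain ⟨v0, hv0, hdeg⟩ := hΔ.2
    have hpos : 0 < (H.edges.filter (fun e => v0 ∈ e)).card := by
      have : H.degree v0 = (H.edges.filter (fun e => v0 ∈ e)).card := rfl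
      omega
    obtain ⟨e, he⟩ := Finset.card_pos.mp hpos
    exact ⟨e, (Finset.mem_filter.mp he).1⟩
  set θ := H.tv k with hθdef
  have hθ1 : 1 ≤ θ := FinHypergraph.one_le_tv hk1 hH hE
  have hθ0 : 0 ≤ θ := by linarith
  have hroot : (H.matchingPoly k).IsRoot θ := FinHypergraph.tv_isRoot' hH hk1 hconn.1
  have hmem : θ ∈ FinHypergraph.rootModuli (H.matchingPoly k) := by
    refine ⟨(θ : ℂ), ?_, ?_⟩
    · have h1 : ((θ : ℝ) : ℂ) = algebraMap ℝ ℂ θ := rfl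
      rw [h1, Polynomial.aeval_algebraMap_apply_eq_algebraMap_eval]
      rw [Polynomial.IsRoot] at hroot
      rw [hroot, map_zero]
    · rw [Complex.norm_real, Real.norm_eq_abs, abs_of_nonneg hθ0]
  have hub : ∀ m ∈ FinHypergraph.rootModuli (H.matchingPoly k), m ≤ θ := by
    rintro m ⟨z, hz0, rfl⟩
    by_contra hlt
    push_neg at hlt
    exact (FinHypergraph.complex_bound k hk1 H.verts.card H rfl hH z hlt).1 hz0
  have hlam : H.lam k = θ := by
    unfold FinHypergraph.lam
    apply le_antisymm
    · exact csSup_le ⟨θ, hmem⟩ hub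
    · exact le_csSup ⟨θ, hub⟩ hmem
  have hsum : 0 < ∑ v ∈ H.verts, ((H.delete {v}).matchingPoly k).eval θ := by
    apply Finset.sum_pos
    · intro v hvv
      apply FinHypergraph.eval_pos_of_tv_lt (FinHypergraph.delete_uniform hH {v}) hk1
      exact FinHypergraph.tv_strict k hk H.verts.card H rfl hH hconn hE v hvv
    · exact hconn.1
  have hder : (Polynomial.derivative (H.matchingPoly k)).eval θ
      = ∑ v ∈ H.verts, ((H.delete {v}).matchingPoly k).eval θ := by
    rw [FinHypergraph.derivative_matchingPoly hk1 hH, Polynomial.eval_finset_sum]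
  refine ⟨by rw [hlam]; linarith, by rw [hlam]; exact hroot, ?_, ?_⟩
  · rw [hlam, hder]
    exact ne_of_gt hsum
  · rw [hlam]
    exact hsum
end

section
/- Let H be a connected k-uniform hypergraph with maximum degree ≥ 2. If the matching polynomial μ(H,x) is ℓ-symmetric (i.e., μ(H,x) = x^t g(x^ℓ) for some t ≥ 0 and polynomial g), then ℓ divides k. Consequently the cyclic index of μ(H,x) — the largest ℓ for which μ(H,x) is ℓ-symmetric — equals k. -/
open scoped Classical

structure FinsetHypergraph (α : Type*) [DecidableEq α] where
  verts : Finset α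
  edges : Finset (Finset α)
  edge_sub : ∀ e ∈ edges, e ⊆ verts

namespace FinsetHypergraph

variable {α : Type*} [DecidableEq α] {β : Type*} [DecidableEq β]

/-- `H` is `k`-uniform: every edge has exactly `k` vertices. -/
def IsUniform (H : FinsetHypergraph α) (k : ℕ) : Prop := ∀ e ∈ H.edges, e.card = k

/-- The degree of a vertex: the number of edges containing it. -/
def degree (H : FinsetHypergraph α) (v : α) : ℕ := (H.edges.filter (fun e => v ∈ e)).card

/-- `Δ` is the maximum degree of `H`. -/
def maxDegree (H : FinsetHypergraph α) (Δ : ℕ) : Prop :=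
  (∀ v, H.degree v ≤ Δ) ∧ ∃ v ∈ H.verts, H.degree v = Δ

/-- Two vertices are adjacent if some edge contains both. -/
def Adj (H : FinsetHypergraph α) (a b : α) : Prop := ∃ e ∈ H.edges, a ∈ e ∧ b ∈ e

/-- `H` is connected: nonempty and any two vertices joined by a walk. -/
def Connected (H : FinsetHypergraph α) : Prop :=
  H.verts.Nonempty ∧ ∀ a ∈ H.verts, ∀ b ∈ H.verts, Relation.ReflTransGen H.Adj a b

/-- A matching: a set of pairwise disjoint edges of `H`. -/
def IsMatching (H : FinsetHypergraph α) (M : Finset (Finset α)) : Prop :=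
  M ⊆ H.edges ∧ ∀ e ∈ M, ∀ f ∈ M, e ≠ f → Disjoint e f

/-- `p(H, r)`: the number of matchings of size `r`. -/
noncomputable def matchCount (H : FinsetHypergraph α) (r : ℕ) : ℕ :=
  (H.edges.powerset.filter (fun M => M.card = r ∧ H.IsMatching M)).card

/-- The matching polynomial `μ(H,x) = Σ_r (-1)^r p(H,r) x^{|V| - k r}`. -/
noncomputable def matchingPoly (H : FinsetHypergraph α) (k : ℕ) : Polynomial ℝ :=
  ∑ r ∈ Finset.range (H.edges.card + 1),
    Polynomial.C ((-1 : ℝ) ^ r * (H.matchCount r : ℝ)) * Polynomial.X ^ (H.verts.card - k * r)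

/-- Deleting a set of vertices: induced sub-hypergraph on `verts \ W`. -/
def delete (H : FinsetHypergraph α) (W : Finset α) : FinsetHypergraph α where
  verts := H.verts \ W
  edges := H.edges.filter (fun e => Disjoint e W)
  edge_sub := by
    intro e he
    simp only [Finset.mem_filter] at he
    exact Finset.subset_sdiff.mpr ⟨H.edge_sub e he.1, he.2⟩

/-- The set of moduli of the complex zeros of a real polynomial. -/
def rootModuli (p : Polynomial ℝ) : Set ℝ :=
  {m | ∃ z : ℂ, (Polynomial.aeval z) p = 0 ∧ ‖z‖ = m}

/-- `λ(H)`: the maximum modulus of the complex zeros of the matching polynomial. -/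
noncomputable def lam (H : FinsetHypergraph α) (k : ℕ) : ℝ :=
  sSup (rootModuli (H.matchingPoly k))

end FinsetHypergraph


namespace FinsetHypergraph

variable {α' : Type*} [DecidableEq α']

lemma matchCount_eq_zero_of_lt {H : FinsetHypergraph α'} {k r : ℕ} (hH : H.IsUniform k)
    (h : H.verts.card < k * r) : H.matchCount r = 0 := by
  rw [matchCount, Finset.card_eq_zero, Finset.filter_eq_empty_iff]
  rintro M hM ⟨hcard, hsub, hdisj⟩
  have hb : (M.biUnion id).card = ∑ e ∈ M, e.card := Finset.card_biUnion hdisj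
  have hsum : ∑ e ∈ M, e.card = k * r := by
    rw [Finset.sum_congr rfl (fun e he => hH e (hsub he))]
    simp [hcard, mul_comm]
  have hsubv : M.biUnion id ⊆ H.verts := by
    intro v hv
    rcases Finset.mem_biUnion.mp hv with ⟨e, he, hve⟩
    exact H.edge_sub e (hsub he) hve
  have := Finset.card_le_card hsubv
  omega

lemma matchCount_zero (H : FinsetHypergraph α') : H.matchCount 0 = 1 := by
  rw [matchCount]
  convert Finset.card_singleton (∅ : Finset (Finset α'))
  ext M
  simp only [Finset.mem_filter, Finset.mem_powerset, Finset.card_eq_zero, Finset.mem_singleton]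
  constructor
  · rintro ⟨-, h, -⟩; exact h
  · rintro rfl
    exact ⟨Finset.empty_subset _, rfl, Finset.empty_subset _, by simp⟩

lemma matchCount_one_pos {H : FinsetHypergraph α'} {e : Finset α'} (he : e ∈ H.edges) :
    0 < H.matchCount 1 := by
  rw [matchCount, Finset.card_pos]
  refine ⟨{e}, Finset.mem_filter.mpr ⟨Finset.mem_powerset.mpr (by simpa), by simp,
    Finset.singleton_subset_iff.mpr he, ?_⟩⟩
  intro a ha b hb hab
  simp only [Finset.mem_singleton] at ha hb
  exact absurd (ha.trans hb.symm) hab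

lemma coeff_matchingPoly (H : FinsetHypergraph α') (k m : ℕ) :
    (H.matchingPoly k).coeff m =
      ∑ r ∈ Finset.range (H.edges.card + 1),
        (-1 : ℝ) ^ r * (H.matchCount r : ℝ) *
          (if m = H.verts.card - k * r then 1 else 0) := by
  rw [matchingPoly, Polynomial.finset_sum_coeff]
  refine Finset.sum_congr rfl fun r _ => ?_
  rw [Polynomial.coeff_C_mul, Polynomial.coeff_X_pow]

end FinsetHypergraph


/-- For a connected `k`-graph with maximum degree `≥ 2`: if `μ(H,x)` is `ℓ`-symmetric
(`μ(H,x) = x^t g(x^ℓ)`), then `ℓ ∣ k`; moreover `μ(H,x)` is `k`-symmetric, so the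
cyclic index of `μ(H,x)` equals `k`. -/
theorem cyclic_index_eq_k {α : Type*} [DecidableEq α]
    (H : FinsetHypergraph α) (k Δ : ℕ) (hk : 2 ≤ k) (hH : H.IsUniform k)
    (hconn : H.Connected) (hΔ : H.maxDegree Δ) (hΔ2 : 2 ≤ Δ) :
    (∀ ℓ : ℕ, 0 < ℓ →
        (∃ (t : ℕ) (g : Polynomial ℝ),
          H.matchingPoly k = Polynomial.X ^ t * g.comp (Polynomial.X ^ ℓ)) → ℓ ∣ k) ∧
      ∃ (t : ℕ) (g : Polynomial ℝ),
        H.matchingPoly k = Polynomial.X ^ t * g.comp (Polynomial.X ^ k) := by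
  classical
  obtain ⟨v, -, hv⟩ := hΔ.2
  have hE2 : 2 ≤ H.edges.card := by
    have hle := Finset.card_le_card (Finset.filter_subset (fun e => v ∈ e) H.edges)
    rw [FinsetHypergraph.degree] at hv
    omega
  obtain ⟨e, he⟩ := Finset.card_pos.mp (by omega : 0 < H.edges.card)
  have hkn : k ≤ H.verts.card := by
    have := Finset.card_le_card (H.edge_sub e he)
    rwa [hH e he] at this
  have hcoeff_n : (H.matchingPoly k).coeff H.verts.card = 1 := by
    rw [FinsetHypergraph.coeff_matchingPoly, Finset.sum_eq_single 0]
    · simp [FinsetHypergraph.matchCount_zero]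
    · intro r hr hr0
      by_cases hle : k * r ≤ H.verts.card
      · have hkr : k ≤ k * r := Nat.le_mul_of_pos_right k (by omega)
        have : ¬ (H.verts.card = H.verts.card - k * r) := by omega
        simp [this]
      · push_neg at hle
        rw [FinsetHypergraph.matchCount_eq_zero_of_lt hH hle]
        simp
    · intro h
      exact absurd (Finset.mem_range.mpr (by omega)) h
  have hcoeff_nk : (H.matchingPoly k).coeff (H.verts.card - k) =
      -(H.matchCount 1 : ℝ) := by
    rw [FinsetHypergraph.coeff_matchingPoly, Finset.sum_eq_single 1]
    · simp
    · intro r hr hr1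
      by_cases hle : k * r ≤ H.verts.card
      · have : ¬ (H.verts.card - k = H.verts.card - k * r) := by
          intro h
          apply hr1
          have hkr : k * r = k * 1 := by omega
          exact Nat.eq_of_mul_eq_mul_left (by omega) hkr
        simp [this]
      · push_neg at hle
        rw [FinsetHypergraph.matchCount_eq_zero_of_lt hH hle]
        simp
    · intro h
      exact absurd (Finset.mem_range.mpr (by omega)) h
  constructor
  · rintro ℓ hℓ ⟨t, g, hgl⟩
    rw [← Polynomial.expand_eq_comp_X_pow] at hgl
    have key : ∀ m, (H.matchingPoly k).coeff m ≠ 0 → t ≤ m ∧ ℓ ∣ m - t := by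
      intro m hm
      rw [hgl, mul_comm, Polynomial.coeff_mul_X_pow'] at hm
      by_cases hle : t ≤ m
      · rw [if_pos hle, Polynomial.coeff_expand hℓ] at hm
        by_cases hd : ℓ ∣ m - t
        · exact ⟨hle, hd⟩
        · rw [if_neg hd] at hm
          exact absurd rfl hm
      · rw [if_neg hle] at hm
        exact absurd rfl hm
    have h1 := key H.verts.card (by rw [hcoeff_n]; norm_num)
    have h2 := key (H.verts.card - k) (by
      rw [hcoeff_nk]
      simpa using (FinsetHypergraph.matchCount_one_pos he).ne')
    have hks : (H.verts.card - t) - ((H.verts.card - k) - t) = k := by omega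
    exact hks ▸ Nat.dvd_sub h1.2 h2.2
  · refine ⟨H.verts.card % k, ∑ r ∈ Finset.range (H.edges.card + 1),
      Polynomial.C ((-1 : ℝ) ^ r * (H.matchCount r : ℝ)) *
        Polynomial.X ^ (H.verts.card / k - r), ?_⟩
    rw [← Polynomial.expand_eq_comp_X_pow, map_sum, Finset.mul_sum]
    unfold FinsetHypergraph.matchingPoly
    refine Finset.sum_congr rfl fun r _ => ?_
    simp only [map_mul, Polynomial.expand_C, map_pow, Polynomial.expand_X, ← pow_mul]
    by_cases hle : k * r ≤ H.verts.card
    · have hk0 : 0 < k := by omega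
      have hrk : r ≤ H.verts.card / k :=
        (Nat.le_div_iff_mul_le hk0).mpr (by rwa [mul_comm])
      have hmul : k * (H.verts.card / k - r) = k * (H.verts.card / k) - k * r :=
        Nat.mul_sub k _ _
      have hmd : H.verts.card % k + k * (H.verts.card / k) = H.verts.card :=
        Nat.mod_add_div _ _
      have hrk' : k * r ≤ k * (H.verts.card / k) := Nat.mul_le_mul_left k hrk
      have hexp : H.verts.card - k * r =
          H.verts.card % k + k * (H.verts.card / k - r) := by omega
      rw [hexp, pow_add]
      ring
    · push_neg at hle
      rw [FinsetHypergraph.matchCount_eq_zero_of_lt hH hle]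
      simp
end

section
/- Let H be a connected k-uniform hypergraph with maximum degree Δ ≥ 2 and k ≥ 3. Then μ(H,x) has at least one nonreal complex zero. -/
open scoped Classical

section Aux

variable {α : Type*} [DecidableEq α]

lemma aux_matchCount_zero (H : FinHypergraph α) : H.matchCount 0 = 1 := by
  unfold FinHypergraph.matchCount
  have : H.edges.powerset.filter (fun M => M.card = 0 ∧ H.IsMatching M)
      = {(∅ : Finset (Finset α))} := by
    ext M
    simp only [Finset.mem_filter, Finset.mem_powerset, Finset.card_eq_zero,
      Finset.mem_singleton]
    constructor
    · rintro ⟨-, h, -⟩; exact h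
    · rintro rfl
      refine ⟨Finset.empty_subset _, rfl, Finset.empty_subset _, ?_⟩
      intro e he; exact absurd he (Finset.notMem_empty e)
  rw [this, Finset.card_singleton]

lemma aux_matchCount_one_pos (H : FinHypergraph α) (hne : H.edges.Nonempty) :
    0 < H.matchCount 1 := by
  obtain ⟨e, he⟩ := hne
  unfold FinHypergraph.matchCount
  apply Finset.card_pos.mpr
  refine ⟨{e}, ?_⟩
  simp only [Finset.mem_filter, Finset.mem_powerset]
  refine ⟨Finset.singleton_subset_iff.mpr he, Finset.card_singleton e,
    Finset.singleton_subset_iff.mpr he, ?_⟩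
  intro a ha b hb hab
  simp only [Finset.mem_singleton] at ha hb
  exact absurd (ha.trans hb.symm) hab

lemma aux_matchCount_le (H : FinHypergraph α) (k r : ℕ) (hH : H.IsUniform k)
    (hr : H.matchCount r ≠ 0) : k * r ≤ H.verts.card := by
  unfold FinHypergraph.matchCount at hr
  obtain ⟨M, hM⟩ := Finset.card_pos.mp (Nat.pos_of_ne_zero hr)
  simp only [Finset.mem_filter, Finset.mem_powerset] at hM
  obtain ⟨hMsub, hMcard, hMsub', hMdisj⟩ := hM
  have hsub : M.biUnion id ⊆ H.verts := by
    intro v hv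
    simp only [Finset.mem_biUnion, id] at hv
    obtain ⟨e, heM, hve⟩ := hv
    exact H.edge_sub e (hMsub heM) hve
  have hcard : (M.biUnion id).card = ∑ e ∈ M, e.card := by
    apply Finset.card_biUnion
    intro x hx y hy hxy
    exact hMdisj x hx y hy hxy
  have hsum : ∑ e ∈ M, e.card = k * r := by
    rw [Finset.sum_congr rfl (fun e he => hH e (hMsub he)), Finset.sum_const, hMcard,
      smul_eq_mul, mul_comm]
  calc k * r = (M.biUnion id).card := by rw [hcard, hsum]
    _ ≤ H.verts.card := Finset.card_le_card hsub

end Aux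

/-- For a connected `k`-graph with maximum degree `Δ ≥ 2` and `k ≥ 3`, the matching
polynomial has at least one nonreal complex zero. -/
theorem exists_nonreal_zero {α : Type*} [DecidableEq α]
    (H : FinHypergraph α) (k Δ : ℕ) (hk : 3 ≤ k) (hH : H.IsUniform k)
    (hconn : H.Connected) (hΔ : H.maxDegree Δ) (hΔ2 : 2 ≤ Δ) :
    ∃ z : ℂ, (Polynomial.aeval z) (H.matchingPoly k) = 0 ∧ z.im ≠ 0 := by
  classical
  set n := H.verts.card with hn
  set P := H.matchingPoly k with hP
  -- there is an edge
  obtain ⟨hΔle, v, hv, hvdeg⟩ := hΔ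
  have hne : H.edges.Nonempty := by
    have : 0 < (H.edges.filter (fun e => v ∈ e)).card := by
      rw [show (H.edges.filter (fun e => v ∈ e)).card = H.degree v from rfl, hvdeg]; omega
    obtain ⟨e, he⟩ := Finset.card_pos.mp this
    exact ⟨e, (Finset.mem_filter.mp he).1⟩
  have hm1 : H.edges.card ≥ 1 := Finset.card_pos.mpr hne
  have hkn : k ≤ n := by
    obtain ⟨e, he⟩ := hne
    calc k = e.card := (hH e he).symm
      _ ≤ n := Finset.card_le_card (H.edge_sub e he)
  have hle : ∀ r, H.matchCount r ≠ 0 → k * r ≤ n := fun r hr =>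
    aux_matchCount_le H k r hH hr
  -- coefficient computations
  have hcoeff : ∀ i, P.coeff i =
      ∑ r ∈ Finset.range (H.edges.card + 1),
        ((-1 : ℝ) ^ r * (H.matchCount r : ℝ)) * (if i = n - k * r then 1 else 0) := by
    intro i
    rw [hP]
    unfold FinHypergraph.matchingPoly
    rw [Polynomial.finset_sum_coeff]
    apply Finset.sum_congr rfl
    intro r _
    rw [Polynomial.coeff_C_mul, Polynomial.coeff_X_pow]
  have hPn : P.coeff n = 1 := by
    rw [hcoeff]
    rw [Finset.sum_eq_single 0]
    · simp [aux_matchCount_zero H]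
    · intro r hr hr0
      by_cases hc : H.matchCount r = 0
      · simp [hc]
      · have h1 : k * r ≤ n := hle r hc
        have h2 : k ≤ k * r := Nat.le_mul_of_pos_right k (Nat.pos_of_ne_zero hr0)
        have : ¬ (n = n - k * r) := by omega
        simp [this]
    · intro h; exact absurd (Finset.mem_range.mpr (by omega)) h
  have hPnk : P.coeff (n - k) = -(H.matchCount 1 : ℝ) := by
    rw [hcoeff]
    rw [Finset.sum_eq_single 1]
    · simp
    · intro r hr hr1
      by_cases hc : H.matchCount r = 0
      · simp [hc]
      · have h1 : k * r ≤ n := hle r hc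
        rcases Nat.eq_zero_or_pos r with rfl | hrpos
        · have hnot : ¬ (n - k = n) := by omega
          simp only [mul_zero, Nat.sub_zero, if_neg hnot, mul_zero]
        · have hr2 : 2 ≤ r := by omega
          have h2 : k + k ≤ k * r := by
            calc k + k = k * 2 := by ring
              _ ≤ k * r := Nat.mul_le_mul_left k hr2
          have : ¬ (n - k = n - k * r) := by omega
          simp [this]
    · intro h; exact absurd (Finset.mem_range.mpr (by omega)) h
  have hmc1 : (0 : ℕ) < H.matchCount 1 := aux_matchCount_one_pos H hne
  set Pc : Polynomial ℂ := P.map (algebraMap ℝ ℂ) with hPc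
  have hPcn : Pc.coeff n = 1 := by
    rw [hPc, Polynomial.coeff_map, hPn, map_one]
  have hPcnk : Pc.coeff (n - k) ≠ 0 := by
    rw [hPc, Polynomial.coeff_map, hPnk]
    simp only [map_neg, map_natCast, ne_eq, neg_eq_zero, Nat.cast_eq_zero]
    omega
  -- existence of a nonzero complex root
  have hPc0 : Pc ≠ 0 := fun h => by simp [h] at hPcn
  have hex : ∃ z : ℂ, Pc.eval z = 0 ∧ z ≠ 0 := by
    by_contra hcon
    push_neg at hcon
    have hsplit : Pc.Splits := IsAlgClosed.splits Pc
    have heq := Polynomial.Splits.eq_prod_roots hsplit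
    have hroots : Pc.roots.map (fun a => Polynomial.X - Polynomial.C a)
        = Multiset.replicate (Multiset.card Pc.roots) Polynomial.X := by
      rw [Multiset.eq_replicate]
      refine ⟨by simp, ?_⟩
      intro b hb
      obtain ⟨a, ha, rfl⟩ := Multiset.mem_map.mp hb
      have ha0 : a = 0 := hcon a ((Polynomial.isRoot_of_mem_roots ha))
      rw [ha0, map_zero, sub_zero]
    rw [hroots, Multiset.prod_replicate] at heq
    set d := Multiset.card Pc.roots
    have h1 : n = d := by
      by_contra hne'
      rw [heq, Polynomial.coeff_C_mul, Polynomial.coeff_X_pow, if_neg hne'] at hPcn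
      simp at hPcn
    have h2 : n - k = d := by
      by_contra hne'
      rw [heq, Polynomial.coeff_C_mul, Polynomial.coeff_X_pow, if_neg hne'] at hPcnk
      simp at hPcnk
    omega
  obtain ⟨z, hz0, hzne⟩ := hex
  have hz : (Polynomial.aeval z) P = 0 := by
    rwa [Polynomial.aeval_def, ← Polynomial.eval_map]
  -- the rotation by a primitive k-th root of unity
  set ζ : ℂ := Complex.exp (2 * Real.pi * Complex.I / k) with hζ
  have hk0 : (k : ℂ) ≠ 0 := Nat.cast_ne_zero.mpr (by omega)
  have hζk : ζ ^ k = 1 := by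
    rw [hζ, ← Complex.exp_nat_mul]
    rw [show (k : ℂ) * (2 * Real.pi * Complex.I / k) = 2 * Real.pi * Complex.I by
      field_simp]
    exact Complex.exp_two_pi_mul_I
  have hζim : ζ.im = Real.sin (2 * Real.pi / k) := by
    rw [hζ, show (2 * Real.pi * Complex.I / k : ℂ) = ((2 * Real.pi / k : ℝ) : ℂ) * Complex.I by
      push_cast; ring]
    exact Complex.exp_ofReal_mul_I_im _
  have hζimpos : 0 < ζ.im := by
    rw [hζim]
    apply Real.sin_pos_of_pos_of_lt_pi
    · positivity
    · have hπ : 0 < Real.pi := Real.pi_pos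
      rw [div_lt_iff₀ (by positivity : (0:ℝ) < k)]
      have : (3 : ℝ) ≤ k := by exact_mod_cast hk
      nlinarith
  have key : ∀ w : ℂ, (Polynomial.aeval (ζ * w)) P = ζ ^ n * (Polynomial.aeval w) P := by
    intro w
    rw [hP]
    unfold FinHypergraph.matchingPoly
    rw [map_sum, map_sum, Finset.mul_sum]
    apply Finset.sum_congr rfl
    intro r _
    simp only [map_mul, Polynomial.aeval_C, map_pow, Polynomial.aeval_X]
    by_cases hc : H.matchCount r = 0
    · simp [hc]
    · have hkr : k * r ≤ n := hle r hc
      have hζpow : ζ ^ (n - k * r) = ζ ^ n := by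
        conv_rhs => rw [← Nat.sub_add_cancel hkr]
        rw [pow_add, pow_mul, hζk, one_pow, mul_one]
      rw [mul_pow, hζpow]
      ring
  -- conclude
  by_cases him : z.im = 0
  · refine ⟨ζ * z, ?_, ?_⟩
    · rw [key z, hz, mul_zero]
    · have hre : z.re ≠ 0 := by
        intro h
        apply hzne
        exact Complex.ext h him
      rw [Complex.mul_im, him, mul_zero, zero_add]
      exact mul_ne_zero (ne_of_gt hζimpos) hre
  · exact ⟨z, hz, him⟩
end
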